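/- arXiv:1404.4015 — 4 statements merged into one kernel-verified Lean document; each statement's English description precedes it below -/
import Mathlib

section
/- For every real θ, the family indexed by all Young diagrams ν with terms e^{−θ²}·(dim(ν)·θ^{|ν|}/|ν|!)² has sum 1 (HasSum); that is, the Poissonized Plancherel measure of parameter θ is a probability distribution on the set of Young diagrams. -/
/-- A function `f : ℕ × ℕ → ℕ` is a standard Young tableau of skew shape `ν / μ` if it
vanishes off the cells of `ν` not in `μ`, is a bijection from those cells onto
`{1, …, |ν| − |μ|}`, and is strictly increasing along each row and down each column. -/
def IsSkewSYT (μ ν : YoungDiagram) (f : ℕ × ℕ → ℕ) : Prop :=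
  (∀ c : ℕ × ℕ, c ∉ ν.cells \ μ.cells → f c = 0) ∧
  Set.BijOn f (↑(ν.cells \ μ.cells)) (Set.Icc 1 (ν.card - μ.card)) ∧
  (∀ i j1 j2 : ℕ, (i, j1) ∈ ν.cells \ μ.cells → (i, j2) ∈ ν.cells \ μ.cells →
    j1 < j2 → f (i, j1) < f (i, j2)) ∧
  (∀ i1 i2 j : ℕ, (i1, j) ∈ ν.cells \ μ.cells → (i2, j) ∈ ν.cells \ μ.cells →
    i1 < i2 → f (i1, j) < f (i2, j))

/-- `dimSkew μ ν` is the number of standard Young tableaux of skew shape `ν / μ`. -/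
noncomputable def dimSkew (μ ν : YoungDiagram) : ℕ :=
  Set.ncard {f : ℕ × ℕ → ℕ | IsSkewSYT μ ν f}

namespace PPaux
open YoungDiagram Finset Function
open scoped Classical

/-- The set of standard Young tableaux of shape ν. -/
def SYT (ν : YoungDiagram) : Set ((ℕ × ℕ) → ℕ) := {f | IsSkewSYT ⊥ ν f}

lemma mem_SYT {ν : YoungDiagram} {f : ℕ × ℕ → ℕ} : f ∈ SYT ν ↔
    (∀ c : ℕ × ℕ, c ∉ ν.cells → f c = 0) ∧
    Set.BijOn f (↑ν.cells) (Set.Icc 1 ν.card) ∧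
    (∀ i j1 j2 : ℕ, (i, j1) ∈ ν.cells → (i, j2) ∈ ν.cells → j1 < j2 →
      f (i, j1) < f (i, j2)) ∧
    (∀ i1 i2 j : ℕ, (i1, j) ∈ ν.cells → (i2, j) ∈ ν.cells → i1 < i2 →
      f (i1, j) < f (i2, j)) := by
  simp [SYT, IsSkewSYT, cells_bot, YoungDiagram.card]

lemma SYT_finite (ν : YoungDiagram) : (SYT ν).Finite := by
  have h : Set.InjOn (fun g : (ℕ × ℕ) → ℕ => (fun c : {x // x ∈ ν.cells} => g c)) (SYT ν) := by
    intro g₁ h₁ g₂ h₂ he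
    funext c
    by_cases hc : c ∈ ν.cells
    · exact congrFun he ⟨c, hc⟩
    · rw [(mem_SYT.1 h₁).1 c hc, (mem_SYT.1 h₂).1 c hc]
  refine Set.Finite.of_finite_image (Set.Finite.subset
    (Set.Finite.pi (fun _ => Set.finite_Iic ν.card)) ?_) h
  rintro x ⟨g, hg, rfl⟩
  intro c _
  exact ((mem_SYT.1 hg).2.1.mapsTo c.2).2

noncomputable def d (ν : YoungDiagram) : ℕ := dimSkew ⊥ ν

lemma d_eq (ν : YoungDiagram) : d ν = (SYT ν).ncard := rfl


lemma cells_bound (ν : YoungDiagram) : ν.cells ⊆ Finset.range ν.card ×ˢ Finset.range ν.card := by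
  rintro ⟨i, j⟩ h
  have hi : Finset.range (i+1) ×ˢ {j} ⊆ ν.cells := by
    rintro ⟨a, b⟩ hab
    simp only [Finset.mem_product, Finset.mem_range, Finset.mem_singleton] at hab
    exact ν.up_left_mem (Nat.lt_succ_iff.1 hab.1) (le_of_eq hab.2) h
  have hj : ({i} ×ˢ Finset.range (j+1) : Finset (ℕ × ℕ)) ⊆ ν.cells := by
    rintro ⟨a, b⟩ hab
    simp only [Finset.mem_product, Finset.mem_range, Finset.mem_singleton] at hab
    exact ν.up_left_mem (le_of_eq hab.1) (Nat.lt_succ_iff.1 hab.2) h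
  have h1 := Finset.card_le_card hi
  have h2 := Finset.card_le_card hj
  simp only [Finset.card_product, Finset.card_range, Finset.card_singleton] at h1 h2
  simp only [Finset.mem_product, Finset.mem_range, YoungDiagram.card]
  omega

lemma level_finite (n : ℕ) : {ν : YoungDiagram | ν.card = n}.Finite := by
  have hinj : Set.InjOn (fun ν : YoungDiagram => ν.cells) {ν | ν.card = n} := by
    intro a _ b _ h; exact YoungDiagram.ext h
  refine Set.Finite.of_finite_image (Set.Finite.subset
    (Set.finite_mem_finset ((Finset.range n ×ˢ Finset.range n).powerset)) ?_) hinj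
  rintro x ⟨ν, hν, rfl⟩
  simp only [Finset.mem_powerset]
  have := cells_bound ν
  rwa [hν] at this

/-- The finset of Young diagrams with `n` cells. -/
noncomputable def level (n : ℕ) : Finset YoungDiagram := (level_finite n).toFinset

@[simp] lemma mem_level {n : ℕ} {ν : YoungDiagram} : ν ∈ level n ↔ ν.card = n := by
  simp [level]

lemma level_zero : level 0 = {(⊥ : YoungDiagram)} := by
  ext ν
  simp only [mem_level, Finset.mem_singleton]
  constructor
  · intro h
    ext c
    simp only [Finset.card_eq_zero] at h
    simp [h, cells_bot]
  · rintro rfl; simp [YoungDiagram.card, cells_bot]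

/-- The covering relation on Young diagrams. -/
def Cov (μ ν : YoungDiagram) : Prop := μ ≤ ν ∧ ν.card = μ.card + 1

lemma Cov.exists_insert {μ ν : YoungDiagram} (h : Cov μ ν) :
    ∃ c, c ∉ μ.cells ∧ ν.cells = insert c μ.cells := by
  have hsub : μ.cells ⊆ ν.cells := cells_subset_iff.2 h.1
  have hcard : (ν.cells \ μ.cells).card = 1 := by
    rw [Finset.card_sdiff_of_subset hsub]
    have := h.2
    simp only [YoungDiagram.card] at this
    omega
  obtain ⟨c, hc⟩ := Finset.card_eq_one.1 hcard
  have hcmem : c ∈ ν.cells \ μ.cells := by rw [hc]; exact Finset.mem_singleton_self c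
  refine ⟨c, (Finset.mem_sdiff.1 hcmem).2, ?_⟩
  ext x
  simp only [Finset.mem_insert]
  constructor
  · intro hx
    by_cases hxμ : x ∈ μ.cells
    · exact Or.inr hxμ
    · left
      have : x ∈ ν.cells \ μ.cells := Finset.mem_sdiff.2 ⟨hx, hxμ⟩
      rw [hc] at this; exact Finset.mem_singleton.1 this
  · rintro (rfl | hx)
    · exact (Finset.mem_sdiff.1 hcmem).1
    · exact hsub hx

noncomputable def upF (μ : YoungDiagram) : Finset YoungDiagram :=
  (level (μ.card + 1)).filter (fun ν => μ ≤ ν)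

noncomputable def covF (ν : YoungDiagram) : Finset YoungDiagram :=
  (level (ν.card - 1)).filter (fun μ => Cov μ ν)

@[simp] lemma mem_upF {μ ν : YoungDiagram} : ν ∈ upF μ ↔ Cov μ ν := by
  simp only [upF, Finset.mem_filter, mem_level, Cov]; tauto

@[simp] lemma mem_covF {μ ν : YoungDiagram} : μ ∈ covF ν ↔ Cov μ ν := by
  simp only [covF, Finset.mem_filter, mem_level]
  constructor
  · exact fun h => h.2
  · intro h; exact ⟨by have := h.2; omega, h⟩

/-- Adding a cell at the end of row `i`, when allowed. -/
def addCell (μ : YoungDiagram) (i : ℕ) (h : i = 0 ∨ μ.rowLen i < μ.rowLen (i - 1)) :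
    YoungDiagram where
  cells := insert (i, μ.rowLen i) μ.cells
  isLowerSet := by
    rintro ⟨x, y⟩ ⟨a, b⟩ hab hx
    obtain ⟨h1, h2⟩ := Prod.mk_le_mk.mp hab
    simp only [Finset.coe_insert, Set.mem_insert_iff, Finset.mem_coe, mem_cells,
      Prod.mk.injEq] at hx ⊢
    rcases hx with ⟨rfl, rfl⟩ | hx
    · rcases lt_or_eq_of_le h2 with hb | rfl
      · exact Or.inr (mem_iff_lt_rowLen.2 (lt_of_lt_of_le hb (μ.rowLen_anti a x h1)))
      · rcases lt_or_eq_of_le h1 with ha | rfl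
        · rcases h with rfl | h
          · omega
          · refine Or.inr (mem_iff_lt_rowLen.2 (lt_of_lt_of_le h (μ.rowLen_anti a (x-1) ?_)))
            omega
        · exact Or.inl ⟨rfl, rfl⟩
    · exact Or.inr (μ.up_left_mem h1 h2 hx)

/-- Removing the corner cell of row `i`, when the corner is removable. -/
def eraseCell (ν : YoungDiagram) (i : ℕ) (h : ν.rowLen (i + 1) < ν.rowLen i) :
    YoungDiagram where
  cells := ν.cells.erase (i, ν.rowLen i - 1)
  isLowerSet := by
    rintro ⟨x, y⟩ ⟨a, b⟩ hab hx
    obtain ⟨h1, h2⟩ := Prod.mk_le_mk.mp hab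
    simp only [Finset.coe_erase, Set.mem_diff, Finset.mem_coe, mem_cells,
      Set.mem_singleton_iff, Prod.mk.injEq, not_and] at hx ⊢
    have hxmem : (x, y) ∈ ν := hx.1
    have hy : y < ν.rowLen x := mem_iff_lt_rowLen.1 hxmem
    refine ⟨ν.up_left_mem h1 h2 hxmem, ?_⟩
    rintro rfl hb
    rcases lt_or_eq_of_le h1 with ha | rfl
    · have hle : ν.rowLen x ≤ ν.rowLen (a + 1) := ν.rowLen_anti _ _ ha
      omega
    · exact hx.2 rfl (by omega)

noncomputable def A (μ : YoungDiagram) : Finset ℕ :=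
  (Finset.range (μ.colLen 0 + 1)).filter (fun i => i = 0 ∨ μ.rowLen i < μ.rowLen (i - 1))

noncomputable def R (μ : YoungDiagram) : Finset ℕ :=
  (Finset.range (μ.colLen 0 + 1)).filter (fun i => μ.rowLen (i + 1) < μ.rowLen i)

lemma mem_A {μ : YoungDiagram} {i : ℕ} :
    i ∈ A μ ↔ i = 0 ∨ μ.rowLen i < μ.rowLen (i - 1) := by
  simp only [A, Finset.mem_filter, Finset.mem_range, and_iff_right_iff_imp]
  rintro (rfl | h)
  · omega
  · have : (i - 1, 0) ∈ μ := mem_iff_lt_rowLen.2 (by omega)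
    have := mem_iff_lt_colLen.1 this
    omega

lemma mem_R {μ : YoungDiagram} {i : ℕ} : i ∈ R μ ↔ μ.rowLen (i + 1) < μ.rowLen i := by
  simp only [R, Finset.mem_filter, Finset.mem_range, and_iff_right_iff_imp]
  intro h
  have : (i, 0) ∈ μ := mem_iff_lt_rowLen.2 (by omega)
  have := mem_iff_lt_colLen.1 this
  omega

lemma card_A_eq (μ : YoungDiagram) : (A μ).card = (R μ).card + 1 := by
  have hA : A μ = insert 0 ((R μ).image (· + 1)) := by
    ext i
    simp only [mem_A, Finset.mem_insert, Finset.mem_image, mem_R]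
    constructor
    · rintro (rfl | h)
      · exact Or.inl rfl
      · rcases Nat.eq_zero_or_pos i with rfl | hi
        · exact Or.inl rfl
        · refine Or.inr ⟨i - 1, ?_, by omega⟩
          rw [Nat.sub_add_cancel hi]
          exact h
    · rintro (rfl | ⟨j, hj, rfl⟩)
      · exact Or.inl rfl
      · right; simpa using hj
  rw [hA, Finset.card_insert_of_notMem (by simp), Finset.card_image_of_injective _
    (fun a b => by omega)]

lemma not_mem_self_rowLen (μ : YoungDiagram) (i : ℕ) : (i, μ.rowLen i) ∉ μ := by
  rw [mem_iff_lt_rowLen]; omega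

lemma card_upF (μ : YoungDiagram) : (upF μ).card = (A μ).card := by
  refine (Finset.card_bij (fun i hi => addCell μ i (mem_A.1 hi)) ?_ ?_ ?_).symm
  · intro i hi
    rw [mem_upF]
    constructor
    · intro c hc; exact Finset.mem_insert_of_mem hc
    · show (insert (i, μ.rowLen i) μ.cells).card = μ.cells.card + 1
      rw [Finset.card_insert_of_notMem (by simpa using not_mem_self_rowLen μ i)]
  · intro i₁ h₁ i₂ h₂ he
    have he' : addCell μ i₁ (mem_A.1 h₁) = addCell μ i₂ (mem_A.1 h₂) := he
    have : (i₁, μ.rowLen i₁) ∈ (addCell μ i₂ (mem_A.1 h₂)).cells := by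
      rw [← he']; exact Finset.mem_insert_self _ _
    simp only [addCell, Finset.mem_insert, Prod.mk.injEq] at this
    rcases this with ⟨h, _⟩ | h
    · exact h
    · exact absurd h (not_mem_self_rowLen μ i₁)
  · intro ν hν
    obtain ⟨c, hcν, hcells⟩ := (mem_upF.1 hν).exists_insert
    obtain ⟨i, j⟩ := c
    have hj1 : μ.rowLen i ≤ j := by
      by_contra hcon
      exact hcν (mem_iff_lt_rowLen.2 (by omega))
    have hj2 : j ≤ μ.rowLen i := by
      by_contra hcon
      have hmem : (i, μ.rowLen i) ∈ ν.cells := by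
        apply ν.up_left_mem (le_refl i) (by omega : μ.rowLen i ≤ j)
        rw [← mem_cells, hcells]; exact Finset.mem_insert_self _ _
      rw [hcells, Finset.mem_insert] at hmem
      rcases hmem with h | h
      · simp only [Prod.mk.injEq] at h; omega
      · exact not_mem_self_rowLen μ i h
    have hj : j = μ.rowLen i := le_antisymm hj2 hj1
    subst hj
    have hi : i = 0 ∨ μ.rowLen i < μ.rowLen (i - 1) := by
      rcases Nat.eq_zero_or_pos i with rfl | hipos
      · exact Or.inl rfl
      · right
        have hmem : (i - 1, μ.rowLen i) ∈ ν.cells := by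
          apply ν.up_left_mem (by omega : i - 1 ≤ i) (le_refl _)
          rw [← mem_cells, hcells]; exact Finset.mem_insert_self _ _
        rw [hcells, Finset.mem_insert] at hmem
        rcases hmem with h | h
        · simp only [Prod.mk.injEq] at h; omega
        · exact mem_iff_lt_rowLen.1 h
    refine ⟨i, mem_A.2 hi, ?_⟩
    apply YoungDiagram.ext
    show insert (i, μ.rowLen i) μ.cells = ν.cells
    rw [hcells]

lemma card_covF (ν : YoungDiagram) : (covF ν).card = (R ν).card := by
  refine (Finset.card_bij (fun i hi => eraseCell ν i (mem_R.1 hi)) ?_ ?_ ?_).symm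
  · intro i hi
    have h := mem_R.1 hi
    have hmem : (i, ν.rowLen i - 1) ∈ ν.cells := mem_iff_lt_rowLen.2 (by omega)
    rw [mem_covF]
    constructor
    · intro c hc; exact Finset.mem_of_mem_erase hc
    · show ν.cells.card = (ν.cells.erase (i, ν.rowLen i - 1)).card + 1
      rw [Finset.card_erase_of_mem hmem]
      have : 0 < ν.cells.card := Finset.card_pos.2 ⟨_, hmem⟩
      omega
  · intro i₁ h₁ i₂ h₂ he
    have he' : eraseCell ν i₁ (mem_R.1 h₁) = eraseCell ν i₂ (mem_R.1 h₂) := he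
    have hm2 : (i₂, ν.rowLen i₂ - 1) ∈ ν.cells :=
      mem_iff_lt_rowLen.2 (by have := mem_R.1 h₂; omega)
    by_contra hne
    have hmem : (i₂, ν.rowLen i₂ - 1) ∈ (eraseCell ν i₁ (mem_R.1 h₁)).cells := by
      simp only [eraseCell, Finset.mem_erase, ne_eq, Prod.mk.injEq, not_and]
      exact ⟨fun h _ => absurd h.symm hne, hm2⟩
    rw [he'] at hmem
    exact Finset.notMem_erase _ _ hmem
  · intro μ hμ
    obtain ⟨c, hcμ, hcells⟩ := (mem_covF.1 hμ).exists_insert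
    obtain ⟨i, j⟩ := c
    have hciν : (i, j) ∈ ν.cells := by rw [hcells]; exact Finset.mem_insert_self _ _
    have hlt : j < ν.rowLen i := mem_iff_lt_rowLen.1 hciν
    have hj : j + 1 = ν.rowLen i := by
      have h2 : (i, j + 1) ∉ ν := by
        intro hmem
        have hm : (i, j + 1) ∈ insert (i, j) μ.cells := by
          rw [← hcells]; exact hmem
        rcases Finset.mem_insert.1 hm with h | h
        · simp only [Prod.mk.injEq] at h; omega
        · exact hcμ (μ.up_left_mem le_rfl (by omega) h)
      have : ¬ (j + 1 < ν.rowLen i) := fun hc => h2 (mem_iff_lt_rowLen.2 hc)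
      omega
    have hR : ν.rowLen (i + 1) < ν.rowLen i := by
      have h2 : (i + 1, j) ∉ ν := by
        intro hmem
        have hm : (i + 1, j) ∈ insert (i, j) μ.cells := by
          rw [← hcells]; exact hmem
        rcases Finset.mem_insert.1 hm with h | h
        · simp only [Prod.mk.injEq] at h; omega
        · exact hcμ (μ.up_left_mem (by omega) le_rfl h)
      have : ¬ (j < ν.rowLen (i + 1)) := fun hc => h2 (mem_iff_lt_rowLen.2 hc)
      omega
    refine ⟨i, mem_R.2 hR, ?_⟩
    apply YoungDiagram.ext
    show ν.cells.erase (i, ν.rowLen i - 1) = μ.cells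
    have hji : ν.rowLen i - 1 = j := by omega
    rw [hji, hcells, Finset.erase_insert (by simpa using hcμ)]

lemma card_upF_eq_card_covF (μ : YoungDiagram) : (upF μ).card = (covF μ).card + 1 := by
  rw [card_upF, card_covF, card_A_eq]
lemma corner_of_insert {μ ν : YoungDiagram} (a b : ℕ) (hcμ : (a, b) ∉ μ.cells)
    (hcells : ν.cells = insert (a, b) μ.cells) :
    (a, b + 1) ∉ ν ∧ (a + 1, b) ∉ ν := by
  constructor
  · intro hmem
    have hm : (a, b + 1) ∈ insert (a, b) μ.cells := by rw [← hcells]; exact hmem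
    rcases Finset.mem_insert.1 hm with h | h
    · simp only [Prod.mk.injEq] at h; omega
    · exact hcμ (μ.up_left_mem le_rfl (by omega) h)
  · intro hmem
    have hm : (a + 1, b) ∈ insert (a, b) μ.cells := by rw [← hcells]; exact hmem
    rcases Finset.mem_insert.1 hm with h | h
    · simp only [Prod.mk.injEq] at h; omega
    · exact hcμ (μ.up_left_mem (by omega) le_rfl h)

lemma d_rec {ν : YoungDiagram} (hpos : 0 < ν.card) : d ν = ∑ μ ∈ covF ν, d μ := by
  classical
  set N := ν.card with hN
  set S : Finset ((ℕ × ℕ) → ℕ) := (SYT_finite ν).toFinset with hS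
  have hmemS : ∀ f, f ∈ S ↔ f ∈ SYT ν := fun f => Set.Finite.mem_toFinset _
  have hd : d ν = S.card := by rw [d_eq]; exact Set.ncard_eq_toFinset_card _ (SYT_finite ν)
  set Q : YoungDiagram → ((ℕ × ℕ) → ℕ) → Prop :=
    fun μ f => ∀ c ∈ ν.cells, c ∉ μ.cells → f c = N with hQ
  have hcover : S = (covF ν).biUnion (fun μ => S.filter (Q μ)) := by
    apply Finset.Subset.antisymm
    · intro f hf
      rw [Finset.mem_biUnion]
      have hfS : f ∈ SYT ν := (hmemS f).1 hf
      obtain ⟨hvan, hbij, hrow, hcol⟩ := mem_SYT.1 hfS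
      have hNmem : N ∈ Set.Icc 1 N := by constructor <;> omega
      obtain ⟨c, hcmem, hcval⟩ := hbij.surjOn hNmem
      obtain ⟨i, j⟩ := c
      have hcmem' : (i, j) ∈ ν.cells := hcmem
      have hcor1 : (i, j + 1) ∉ ν := by
        intro hmem
        have h1 : f (i, j) < f (i, j + 1) := hrow i j (j + 1) hcmem' hmem (by omega)
        have h2 : f (i, j + 1) ≤ N := (hbij.mapsTo hmem).2
        rw [hcval] at h1; omega
      have hcor2 : (i + 1, j) ∉ ν := by
        intro hmem
        have h1 : f (i, j) < f (i + 1, j) := hcol i (i + 1) j hcmem' hmem (by omega)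
        have h2 : f (i + 1, j) ≤ N := (hbij.mapsTo hmem).2
        rw [hcval] at h1; omega
      have hr1 : j < ν.rowLen i := mem_iff_lt_rowLen.1 hcmem'
      have hr2 : ¬(j + 1 < ν.rowLen i) := fun hcont => hcor1 (mem_iff_lt_rowLen.2 hcont)
      have hr3 : ¬(j < ν.rowLen (i + 1)) := fun hcont => hcor2 (mem_iff_lt_rowLen.2 hcont)
      have hcorner : ν.rowLen (i + 1) < ν.rowLen i := by omega
      have hjeq : ν.rowLen i - 1 = j := by omega
      refine ⟨eraseCell ν i hcorner, ?_, ?_⟩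
      · rw [mem_covF]
        constructor
        · intro x hx; exact Finset.mem_of_mem_erase hx
        · show ν.cells.card = (ν.cells.erase (i, ν.rowLen i - 1)).card + 1
          rw [Finset.card_erase_of_mem (by rw [hjeq]; exact hcmem')]
          have hcc : 0 < ν.cells.card := hpos
          omega
      · rw [Finset.mem_filter]
        refine ⟨hf, fun x hx1 hx2 => ?_⟩
        have hxc : x = (i, ν.rowLen i - 1) := by
          by_contra hxne
          exact hx2 (Finset.mem_erase.2 ⟨hxne, hx1⟩)
        rw [hxc, hjeq]
        exact hcval
    · intro f hf
      obtain ⟨μ, _, hfμ⟩ := Finset.mem_biUnion.1 hf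
      exact (Finset.mem_filter.1 hfμ).1
  have hdisj : ∀ μ₁ ∈ covF ν, ∀ μ₂ ∈ covF ν, μ₁ ≠ μ₂ →
      Disjoint (S.filter (Q μ₁)) (S.filter (Q μ₂)) := by
    intro μ₁ h₁ μ₂ h₂ hne
    rw [Finset.disjoint_left]
    intro f hf₁ hf₂
    obtain ⟨hfS, hq₁⟩ := Finset.mem_filter.1 hf₁
    obtain ⟨_, hq₂⟩ := Finset.mem_filter.1 hf₂
    have hfSYT : f ∈ SYT ν := (hmemS f).1 hfS
    obtain ⟨_, hbij, _, _⟩ := mem_SYT.1 hfSYT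
    obtain ⟨c₁, hc₁, hcells₁⟩ := (mem_covF.1 h₁).exists_insert
    obtain ⟨c₂, hc₂, hcells₂⟩ := (mem_covF.1 h₂).exists_insert
    have hc₁ν : c₁ ∈ ν.cells := by rw [hcells₁]; exact Finset.mem_insert_self _ _
    have hc₂ν : c₂ ∈ ν.cells := by rw [hcells₂]; exact Finset.mem_insert_self _ _
    have hv₁ : f c₁ = N := hq₁ c₁ hc₁ν hc₁
    have hv₂ : f c₂ = N := hq₂ c₂ hc₂ν hc₂
    have hceq : c₁ = c₂ := hbij.injOn hc₁ν hc₂ν (by rw [hv₁, hv₂])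
    apply hne
    apply YoungDiagram.ext
    have e₁ : μ₁.cells = ν.cells.erase c₁ := by
      rw [hcells₁, Finset.erase_insert hc₁]
    have e₂ : μ₂.cells = ν.cells.erase c₂ := by
      rw [hcells₂, Finset.erase_insert hc₂]
    rw [e₁, e₂, hceq]
  have hcards : ∀ μ ∈ covF ν, (S.filter (Q μ)).card = d μ := by
    intro μ hμ
    have hμc : μ.card = N - 1 := by have := (mem_covF.1 hμ).2; omega
    obtain ⟨c, hcμ, hcells⟩ := (mem_covF.1 hμ).exists_insert
    obtain ⟨a, b⟩ := c
    have hsub : μ.cells ⊆ ν.cells := cells_subset_iff.2 (mem_covF.1 hμ).1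
    have hcν : (a, b) ∈ ν.cells := by rw [hcells]; exact Finset.mem_insert_self _ _
    obtain ⟨hcor1, hcor2⟩ := corner_of_insert a b hcμ hcells
    have hx_of : ∀ x, x ∈ ν.cells → x ≠ (a, b) → x ∈ μ.cells := by
      intro x hx hxne
      rcases Finset.mem_insert.1 (by rw [← hcells]; exact hx) with h | h
      · exact absurd h hxne
      · exact h
    rw [d_eq, Set.ncard_eq_toFinset_card _ (SYT_finite μ)]
    refine Finset.card_nbij' (fun f => Function.update f (a, b) 0)
      (fun g => Function.update g (a, b) N) ?_ ?_ ?_ ?_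
    · -- forward maps into SYT μ
      intro f hf
      beta_reduce
      obtain ⟨hfS, hq⟩ := Finset.mem_filter.1 hf
      obtain ⟨hvan, hbij, hrow, hcol⟩ := mem_SYT.1 ((hmemS f).1 hfS)
      have hfc : f (a, b) = N := hq (a, b) hcν hcμ
      rw [Finset.mem_coe, Set.Finite.mem_toFinset, mem_SYT, hμc]
      have hne_of_mem : ∀ x, x ∈ μ.cells → x ≠ (a, b) := by
        intro x hx hxe; exact hcμ (hxe ▸ hx)
      have hval : ∀ x, x ∈ μ.cells → Function.update f (a, b) 0 x = f x := by
        intro x hx; exact Function.update_of_ne (hne_of_mem x hx) _ _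
      have hfxne : ∀ x, x ∈ μ.cells → f x ≠ N := by
        intro x hx he
        exact hne_of_mem x hx (hbij.injOn (hsub hx) hcν (by rw [he, hfc]))
      refine ⟨?_, ⟨?_, ?_, ?_⟩, ?_, ?_⟩
      · intro x hx
        by_cases hxc : x = (a, b)
        · rw [hxc]; simp
        · rw [Function.update_of_ne hxc]
          exact hvan x (fun hxν => hx (hx_of x hxν hxc))
      · intro x hx
        simp only [Finset.mem_coe] at hx
        rw [hval x hx]
        have h1 := hbij.mapsTo (hsub hx)
        have h2 := hfxne x hx
        constructor
        · exact h1.1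
        · have := h1.2; omega
      · intro x hx y hy hxy
        simp only [Finset.mem_coe] at hx hy
        rw [hval x hx, hval y hy] at hxy
        exact hbij.injOn (hsub hx) (hsub hy) hxy
      · intro v hv
        have hv' : v ∈ Set.Icc 1 N := ⟨hv.1, by have := hv.2; omega⟩
        obtain ⟨x, hx, hxv⟩ := hbij.surjOn hv'
        have hxμ : x ∈ μ.cells := by
          apply hx_of x hx
          intro hxe
          rw [hxe] at hxv
          rw [hfc] at hxv
          have := hv.2; omega
        exact ⟨x, hxμ, by rw [hval x hxμ]; exact hxv⟩
      · intro i j1 j2 h1 h2 hlt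
        rw [hval _ h1, hval _ h2]
        exact hrow i j1 j2 (hsub h1) (hsub h2) hlt
      · intro i1 i2 j h1 h2 hlt
        rw [hval _ h1, hval _ h2]
        exact hcol i1 i2 j (hsub h1) (hsub h2) hlt
    · -- backward maps into filter
      intro g hg
      beta_reduce
      obtain ⟨hvan, hbij, hrow, hcol⟩ := mem_SYT.1 ((Set.Finite.mem_toFinset _).1 hg)
      rw [hμc] at hbij
      have hgc : g (a, b) = 0 := hvan (a, b) hcμ
      set f := Function.update g (a, b) N with hfdef
      have hfc : f (a, b) = N := by rw [hfdef]; simp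
      have hval : ∀ x, x ≠ (a, b) → f x = g x := by
        intro x hx; exact Function.update_of_ne hx _ _
      rw [Finset.mem_coe, Finset.mem_filter]
      constructor
      · rw [hmemS, mem_SYT]
        refine ⟨?_, ⟨?_, ?_, ?_⟩, ?_, ?_⟩
        · intro x hx
          have hxc : x ≠ (a, b) := fun he => hx (he ▸ hcν)
          rw [hval x hxc]
          exact hvan x (fun hxμ => hx (hsub hxμ))
        · intro x hx
          simp only [Finset.mem_coe] at hx
          by_cases hxc : x = (a, b)
          · rw [hxc, hfc]; exact ⟨by omega, le_rfl⟩
          · rw [hval x hxc]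
            have := hbij.mapsTo (hx_of x hx hxc)
            exact ⟨this.1, by have := this.2; omega⟩
        · intro x hx y hy hxy
          simp only [Finset.mem_coe] at hx hy
          by_cases hxc : x = (a, b) <;> by_cases hyc : y = (a, b)
          · rw [hxc, hyc]
          · rw [hxc, hfc, hval y hyc] at hxy
            have := (hbij.mapsTo (hx_of y hy hyc)).2
            omega
          · rw [hyc, hfc, hval x hxc] at hxy
            have := (hbij.mapsTo (hx_of x hx hxc)).2
            omega
          · rw [hval x hxc, hval y hyc] at hxy
            exact hbij.injOn (hx_of x hx hxc) (hx_of y hy hyc) hxy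
        · intro v hv
          by_cases hvN : v = N
          · exact ⟨(a, b), hcν, by rw [hfc, hvN]⟩
          · have hv' : v ∈ Set.Icc 1 (N - 1) := ⟨hv.1, by have := hv.2; omega⟩
            obtain ⟨x, hx, hxv⟩ := hbij.surjOn hv'
            simp only [Finset.mem_coe] at hx
            refine ⟨x, hsub hx, ?_⟩
            rw [hval x (fun he => hcμ (he ▸ hx))]
            exact hxv
        · intro i j1 j2 h1 h2 hlt
          by_cases h2c : (i, j2) = (a, b)
          · have h1c : (i, j1) ≠ (a, b) := by
              intro he
              simp only [Prod.mk.injEq] at he h2c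
              omega
            rw [h2c, hfc, hval _ h1c]
            have := (hbij.mapsTo (hx_of _ h1 h1c)).2
            omega
          · have h1c : (i, j1) ≠ (a, b) := by
              intro he
              apply hcor1
              simp only [Prod.mk.injEq] at he
              exact ν.up_left_mem (le_of_eq he.1.symm) (by omega) h2
            rw [hval _ h1c, hval _ h2c]
            exact hrow i j1 j2 (hx_of _ h1 h1c) (hx_of _ h2 h2c) hlt
        · intro i1 i2 j h1 h2 hlt
          by_cases h2c : (i2, j) = (a, b)
          · have h1c : (i1, j) ≠ (a, b) := by
              intro he
              simp only [Prod.mk.injEq] at he h2c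
              omega
            rw [h2c, hfc, hval _ h1c]
            have := (hbij.mapsTo (hx_of _ h1 h1c)).2
            omega
          · have h1c : (i1, j) ≠ (a, b) := by
              intro he
              apply hcor2
              simp only [Prod.mk.injEq] at he
              exact ν.up_left_mem (by omega) (le_of_eq he.2.symm) h2
            rw [hval _ h1c, hval _ h2c]
            exact hcol i1 i2 j (hx_of _ h1 h1c) (hx_of _ h2 h2c) hlt
      · intro x hx1 hx2
        have : x = (a, b) := by
          by_contra hxne
          exact hx2 (hx_of x hx1 hxne)
        rw [this, hfc]
    · -- left inverse
      intro f hf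
      beta_reduce
      obtain ⟨hfS, hq⟩ := Finset.mem_filter.1 hf
      have hfc : f (a, b) = N := hq (a, b) hcν hcμ
      rw [Function.update_idem, ← hfc, Function.update_eq_self]
    · -- right inverse
      intro g hg
      beta_reduce
      obtain ⟨hvan, _, _, _⟩ := mem_SYT.1 ((Set.Finite.mem_toFinset _).1 hg)
      have hgc : g (a, b) = 0 := hvan (a, b) hcμ
      rw [Function.update_idem, ← hgc, Function.update_eq_self]
  rw [hd, hcover, Finset.card_biUnion hdisj]
  exact Finset.sum_congr rfl hcards

lemma card_eq_of_le {μ ν : YoungDiagram} (h : μ ≤ ν) (hc : ν.card ≤ μ.card) : μ = ν :=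
  YoungDiagram.ext (Finset.eq_of_subset_of_card_le (cells_subset_iff.2 h) hc)

lemma commutation {μ l : YoungDiagram} (h : μ.card = l.card) (hne : μ ≠ l) :
    (upF μ ∩ upF l).card = (covF μ ∩ covF l).card := by
  set n := μ.card with hn
  have hsum : (μ ⊔ l).card + (μ ⊓ l).card = n + n := by
    have hu := Finset.card_union_add_card_inter μ.cells l.cells
    have e1 : (μ ⊔ l).card = (μ.cells ∪ l.cells).card := by
      show (μ ⊔ l).cells.card = _
      rw [cells_sup]
    have e2 : (μ ⊓ l).card = (μ.cells ∩ l.cells).card := by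
      show (μ ⊓ l).cells.card = _
      rw [cells_inf]
    have h1 : μ.cells.card = n := rfl
    have h2 : l.cells.card = n := h.symm
    omega
  have hsup : n + 1 ≤ (μ ⊔ l).card := by
    by_contra hcon
    push_neg at hcon
    have h1 : μ = μ ⊔ l := card_eq_of_le le_sup_left (by omega)
    have h2 : l ≤ μ := h1 ▸ le_sup_right
    exact hne (card_eq_of_le h2 (by omega)).symm
  have hup : upF μ ∩ upF l ⊆ {μ ⊔ l} := by
    intro ν hν
    rw [Finset.mem_inter, mem_upF, mem_upF] at hν
    obtain ⟨⟨hm1, hc1⟩, hm2, hc2⟩ := hν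
    have hle : μ ⊔ l ≤ ν := sup_le hm1 hm2
    have heq : μ ⊔ l = ν := card_eq_of_le hle (by omega)
    rw [Finset.mem_singleton, heq]
  have hcov : covF μ ∩ covF l ⊆ {μ ⊓ l} := by
    intro ρ hρ
    rw [Finset.mem_inter, mem_covF, mem_covF] at hρ
    obtain ⟨⟨hm1, hc1⟩, hm2, hc2⟩ := hρ
    have hle : ρ ≤ μ ⊓ l := le_inf hm1 hm2
    have hmono : (μ ⊓ l).card ≤ μ.card := Finset.card_le_card (cells_subset_iff.2 inf_le_left)
    have heq : ρ = μ ⊓ l := card_eq_of_le hle (by omega)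
    rw [Finset.mem_singleton, heq]
  by_cases hss : (μ ⊔ l).card = n + 1
  · have hinfc : (μ ⊓ l).card = n - 1 := by omega
    have h1 : upF μ ∩ upF l = {μ ⊔ l} := by
      refine Finset.Subset.antisymm hup ?_
      simp only [Finset.singleton_subset_iff, Finset.mem_inter, mem_upF]
      exact ⟨⟨le_sup_left, by omega⟩, le_sup_right, by omega⟩
    have h2 : covF μ ∩ covF l = {μ ⊓ l} := by
      refine Finset.Subset.antisymm hcov ?_
      simp only [Finset.singleton_subset_iff, Finset.mem_inter, mem_covF]
      exact ⟨⟨inf_le_left, by omega⟩, inf_le_right, by omega⟩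
    rw [h1, h2]
    simp
  · have h1 : upF μ ∩ upF l = ∅ := by
      refine Finset.eq_empty_of_forall_notMem (fun ν hν => ?_)
      have hmem := hup hν
      rw [Finset.mem_singleton] at hmem
      have hc := (mem_upF.1 (Finset.mem_inter.1 hν).1).2
      rw [hmem] at hc
      exact hss hc
    have h2 : covF μ ∩ covF l = ∅ := by
      refine Finset.eq_empty_of_forall_notMem (fun ρ hρ => ?_)
      have hmem := hcov hρ
      rw [Finset.mem_singleton] at hmem
      have hc := (mem_covF.1 (Finset.mem_inter.1 hρ).1).2
      rw [hmem] at hc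
      omega
    rw [h1, h2]

lemma card_zero_bot {ρ : YoungDiagram} (h : ρ.card = 0) : ρ = ⊥ :=
  YoungDiagram.ext (by rw [Finset.card_eq_zero.1 h, cells_bot])

lemma bot_card : (⊥ : YoungDiagram).card = 0 := by
  simp [YoungDiagram.card, cells_bot]

lemma d_bot : d ⊥ = 1 := by
  rw [d_eq]
  have hset : SYT (⊥ : YoungDiagram) = {fun _ => 0} := by
    ext f
    rw [mem_SYT]
    constructor
    · rintro ⟨hvan, -, -, -⟩
      funext c
      exact hvan c (by simp [cells_bot])
    · rintro rfl
      refine ⟨fun c _ => rfl, ?_, fun i j1 j2 h1 => ?_, fun i1 i2 j h1 => ?_⟩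
      · have hIcc : Set.Icc 1 (⊥ : YoungDiagram).card = ∅ := by
          rw [bot_card]
          exact Set.Icc_eq_empty (by norm_num)
        rw [hIcc, cells_bot]
        simpa using Set.bijOn_empty _
      · simp [cells_bot] at h1
      · simp [cells_bot] at h1
  rw [hset, Set.ncard_singleton]

lemma covF_card_zero {ρ : YoungDiagram} (h : ρ.card = 0) : covF ρ = ∅ := by
  refine Finset.eq_empty_of_forall_notMem (fun σ hσ => ?_)
  have := (mem_covF.1 hσ).2
  omega

lemma covF_of_card_one {ν : YoungDiagram} (h : ν.card = 1) : covF ν = {⊥} := by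
  ext μ
  simp only [mem_covF, Finset.mem_singleton]
  constructor
  · intro hc
    exact card_zero_bot (by have := hc.2; omega)
  · rintro rfl
    exact ⟨bot_le, by rw [h, bot_card]⟩

lemma up_sum : ∀ (n : ℕ) (ρ : YoungDiagram), ρ.card = n →
    ∑ ν ∈ upF ρ, d ν = (n + 1) * d ρ := by
  intro n
  induction n with
  | zero =>
    intro ρ hρ
    obtain rfl := card_zero_bot hρ
    have hall : ∀ ν ∈ upF ⊥, d ν = 1 := by
      intro ν hν
      have hc : ν.card = 1 := by
        have := (mem_upF.1 hν).2
        rw [bot_card] at this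
        omega
      rw [d_rec (by omega), covF_of_card_one hc, Finset.sum_singleton, d_bot]
    rw [Finset.sum_congr rfl hall, Finset.sum_const, smul_eq_mul, mul_one,
      card_upF_eq_card_covF, covF_card_zero bot_card]
    simp [d_bot]
  | succ m ih =>
    intro ρ hρ
    have hn1 : ∀ ν ∈ upF ρ, d ν = ∑ μ ∈ covF ν, d μ := by
      intro ν hν
      exact d_rec (by have := (mem_upF.1 hν).2; omega)
    rw [Finset.sum_congr rfl hn1]
    rw [Finset.sum_comm' (s' := fun μ => upF ρ ∩ upF μ) (t' := level (m + 1)) ?hswap]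
    case hswap =>
      intro ν μ
      simp only [mem_upF, mem_covF, Finset.mem_inter, mem_level]
      constructor
      · rintro ⟨h1, h2⟩
        refine ⟨⟨h1, h2⟩, ?_⟩
        have := h1.2; have := h2.2; omega
      · rintro ⟨⟨h1, h2⟩, _⟩; exact ⟨h1, h2⟩
    have hconst : ∀ μ ∈ level (m + 1), ∑ _ν ∈ upF ρ ∩ upF μ, d μ =
        (upF ρ ∩ upF μ).card * d μ := by
      intro μ _; rw [Finset.sum_const, smul_eq_mul]
    rw [Finset.sum_congr rfl hconst]
    have hsplit : ∀ μ ∈ level (m + 1), (upF ρ ∩ upF μ).card * d μ =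
        (covF ρ ∩ covF μ).card * d μ + (if ρ = μ then d μ else 0) := by
      intro μ hμ
      by_cases he : ρ = μ
      · subst he
        simp only [Finset.inter_self, if_pos rfl]
        rw [card_upF_eq_card_covF]
        simp [add_mul]
      · rw [commutation (by rw [hρ, mem_level.1 hμ]) he, if_neg he, add_zero]
    rw [Finset.sum_congr rfl hsplit, Finset.sum_add_distrib]
    have hite : ∑ μ ∈ level (m + 1), (if ρ = μ then d μ else 0) = d ρ := by
      rw [Finset.sum_ite_eq (level (m + 1)) ρ d, if_pos (mem_level.2 hρ)]
    rw [hite]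
    have hmain : ∑ μ ∈ level (m + 1), (covF ρ ∩ covF μ).card * d μ = (m + 1) * d ρ := by
      have hre : ∀ μ ∈ level (m + 1), (covF ρ ∩ covF μ).card * d μ =
          ∑ σ ∈ covF ρ ∩ covF μ, d μ := by
        intro μ _; rw [Finset.sum_const, smul_eq_mul]
      rw [Finset.sum_congr rfl hre]
      rw [Finset.sum_comm' (s' := fun σ => upF σ) (t' := covF ρ) ?hswap2]
      case hswap2 =>
        intro μ σ
        simp only [mem_level, Finset.mem_inter, mem_covF, mem_upF]
        constructor
        · rintro ⟨hc, h1, h2⟩; exact ⟨h2, h1⟩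
        · rintro ⟨h2, h1⟩
          refine ⟨?_, h1, h2⟩
          have := h1.2; have := h2.2; omega
      have hih : ∀ σ ∈ covF ρ, ∑ μ ∈ upF σ, d μ = (m + 1) * d σ := by
        intro σ hσ
        apply ih
        have := (mem_covF.1 hσ).2; omega
      rw [Finset.sum_congr rfl hih, ← Finset.mul_sum, ← d_rec (by omega)]
    rw [hmain]
    ring

lemma level_sum : ∀ n : ℕ, ∑ ν ∈ level n, d ν * d ν = Nat.factorial n := by
  intro n
  induction n with
  | zero =>
    rw [level_zero]
    simp [d_bot, Nat.factorial]
  | succ m ih =>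
    have h1 : ∀ ν ∈ level (m + 1), d ν * d ν = ∑ μ ∈ covF ν, d ν * d μ := by
      intro ν hν
      rw [← Finset.mul_sum, ← d_rec (by have := mem_level.1 hν; omega)]
    rw [Finset.sum_congr rfl h1]
    rw [Finset.sum_comm' (s' := fun μ => upF μ) (t' := level m) ?hsw]
    case hsw =>
      intro ν μ
      simp only [mem_level, mem_covF, mem_upF]
      constructor
      · rintro ⟨hc, h2⟩
        exact ⟨h2, by have := h2.2; omega⟩
      · rintro ⟨h2, hc⟩
        exact ⟨by have := h2.2; omega, h2⟩
    have h2 : ∀ μ ∈ level m, ∑ ν ∈ upF μ, d ν * d μ = (m + 1) * (d μ * d μ) := by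
      intro μ hμ
      rw [← Finset.sum_mul, up_sum m μ (mem_level.1 hμ)]
      ring
    rw [Finset.sum_congr rfl h2, ← Finset.mul_sum, ih, Nat.factorial_succ]

end PPaux

/-- The Poissonized Plancherel measure of parameter `θ` is a probability distribution
on the set of Young diagrams. -/
theorem poissonizedPlancherel_hasSum_one (θ : ℝ) :
    HasSum (fun ν : YoungDiagram =>
      Real.exp (-θ ^ 2) * ((dimSkew ⊥ ν : ℝ) * θ ^ ν.card / (Nat.factorial ν.card : ℝ)) ^ 2)
      1 := by
  classical
  set x : ℝ := θ ^ 2 with hx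
  have hxnn : 0 ≤ x := sq_nonneg θ
  set F : YoungDiagram → ℝ := fun ν =>
    Real.exp (-θ ^ 2) * ((dimSkew ⊥ ν : ℝ) * θ ^ ν.card / (Nat.factorial ν.card : ℝ)) ^ 2
    with hF
  have hFnn : ∀ ν, 0 ≤ F ν := fun ν => mul_nonneg (Real.exp_nonneg _) (sq_nonneg _)
  have hlevel : ∀ n : ℕ, ∑ ν ∈ PPaux.level n, F ν =
      Real.exp (-x) * x ^ n / (Nat.factorial n : ℝ) := by
    intro n
    have hfacne : (Nat.factorial n : ℝ) ≠ 0 := Nat.cast_ne_zero.2 (Nat.factorial_ne_zero n)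
    have hterm : ∀ ν ∈ PPaux.level n, F ν =
        (Real.exp (-x) * x ^ n / ((Nat.factorial n : ℝ) * (Nat.factorial n : ℝ))) *
          ((PPaux.d ν : ℝ) * (PPaux.d ν : ℝ)) := by
      intro ν hν
      have hc : ν.card = n := PPaux.mem_level.1 hν
      have hd : dimSkew ⊥ ν = PPaux.d ν := rfl
      rw [hF]
      simp only [hd, hc]
      have hpow : (θ ^ n) ^ 2 = x ^ n := by
        rw [hx, ← pow_mul, ← pow_mul, Nat.mul_comm]
      have hexpand : ((PPaux.d ν : ℝ) * θ ^ n / (Nat.factorial n : ℝ)) ^ 2 =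
          (PPaux.d ν : ℝ) * (PPaux.d ν : ℝ) * (θ ^ n) ^ 2 /
            ((Nat.factorial n : ℝ) * (Nat.factorial n : ℝ)) := by ring
      rw [hexpand, hpow, hx]
      ring
    rw [Finset.sum_congr rfl hterm, ← Finset.mul_sum]
    have hcast : ∑ ν ∈ PPaux.level n, ((PPaux.d ν : ℝ) * (PPaux.d ν : ℝ)) =
        (Nat.factorial n : ℝ) := by
      rw [← PPaux.level_sum n]
      push_cast
      rfl
    rw [hcast]
    field_simp
  set G : YoungDiagram → ENNReal := fun ν => ENNReal.ofReal (F ν) with hG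
  have hexp : ∑' n : ℕ, x ^ n / (Nat.factorial n : ℝ) = Real.exp x := by
    rw [Real.exp_eq_exp_ℝ, NormedSpace.exp_eq_tsum_div]
  have hsumexp : Summable (fun n : ℕ => Real.exp (-x) * x ^ n / (Nat.factorial n : ℝ)) := by
    have h := (Real.summable_pow_div_factorial x).mul_left (Real.exp (-x))
    refine h.congr (fun n => ?_)
    ring
  have htsumG : ∑' ν, G ν = 1 := by
    have he : ∑' (p : Σ n : ℕ, {ν : YoungDiagram // ν.card = n}),
        G ((Equiv.sigmaFiberEquiv (fun ν : YoungDiagram => ν.card)) p) = ∑' ν, G ν :=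
      Equiv.tsum_eq _ _
    rw [← he, ENNReal.tsum_sigma']
    have hinner : ∀ n : ℕ, ∑' (v : {ν : YoungDiagram // ν.card = n}),
        G ((Equiv.sigmaFiberEquiv (fun ν : YoungDiagram => ν.card)) ⟨n, v⟩) =
        ENNReal.ofReal (Real.exp (-x) * x ^ n / (Nat.factorial n : ℝ)) := by
      intro n
      haveI : Finite {ν : YoungDiagram // ν.card = n} := (PPaux.level_finite n).to_subtype
      haveI : Fintype {ν : YoungDiagram // ν.card = n} := Fintype.ofFinite _
      rw [tsum_fintype]
      have hsum : ∑ v : {ν : YoungDiagram // ν.card = n},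
          G ((Equiv.sigmaFiberEquiv (fun ν : YoungDiagram => ν.card)) ⟨n, v⟩) =
          ∑ ν ∈ PPaux.level n, G ν := by
        rw [← Finset.sum_coe_sort (PPaux.level n) G]
        exact Fintype.sum_equiv
          (Equiv.subtypeEquivRight (fun ν => (PPaux.mem_level (ν := ν)).symm)) _ _ (fun v => rfl)
      rw [hsum, hG]
      rw [← ENNReal.ofReal_sum_of_nonneg (fun ν _ => hFnn ν), hlevel n]
    rw [tsum_congr hinner]
    rw [← ENNReal.ofReal_tsum_of_nonneg (fun n => by positivity) hsumexp]
    have hsum1 : ∑' n : ℕ, Real.exp (-x) * x ^ n / (Nat.factorial n : ℝ) = 1 := by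
      have h1 : (fun n : ℕ => Real.exp (-x) * x ^ n / (Nat.factorial n : ℝ)) =
          fun n : ℕ => Real.exp (-x) * (x ^ n / (Nat.factorial n : ℝ)) := by
        funext n; ring
      rw [h1, tsum_mul_left, hexp, ← Real.exp_add]
      simp
    rw [hsum1, ENNReal.ofReal_one]
  have hsummable : Summable F := by
    have h := ENNReal.summable_toReal (by rw [htsumG]; exact ENNReal.one_ne_top)
    refine h.congr (fun ν => ?_)
    exact ENNReal.toReal_ofReal (hFnn ν)
  have htsum : ∑' ν, F ν = 1 := by
    have h1 : (∑' ν, G ν).toReal = ∑' ν, (G ν).toReal :=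
      ENNReal.tsum_toReal_eq (fun ν => ENNReal.ofReal_ne_top)
    rw [htsumG] at h1
    simp only [ENNReal.toReal_one] at h1
    have h2 : ∀ ν, (G ν).toReal = F ν := fun ν => ENNReal.toReal_ofReal (hFnn ν)
    rw [tsum_congr h2] at h1
    exact h1.symm
  exact htsum ▸ hsummable.hasSum
end

section
/- Let N ∈ ℕ, let μ ⊆ λ be Young diagrams each with at most N rows, and let t ∈ ℝ. Define the N × N real matrix M by M_{a,b} = t^{e(a,b)}/e(a,b)! when e(a,b) := (λ_b − b) − (μ_a − a) ≥ 0, and M_{a,b} = 0 when e(a,b) < 0, for a, b ∈ {1, ..., N}. Then det M = dim(λ/μ) · t^{|λ|−|μ|}/(|λ|−|μ|)!. This is the Jacobi–Trudi identity evaluated at the Plancherel specialization, which identifies the Karlin–McGregor determinants of Poisson transition weights with skew Schur function values in the proof that the Poissonized RS line ensemble is a family of non-intersecting Poisson arches. -/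
open Finset in
/-- Poisson-type weight `1/e!` for `e ≥ 0`, `0` otherwise. -/
noncomputable def pw (e : ℤ) : ℝ := if 0 ≤ e then 1 / (Nat.factorial e.toNat : ℝ) else 0

lemma pw_key (e : ℤ) : (e : ℝ) * pw e = pw (e - 1) := by
  rcases lt_trichotomy e 0 with h | h | h
  · rw [pw, pw, if_neg (by omega), if_neg (by omega), mul_zero]
  · subst h; simp [pw]
  · lift e to ℕ using h.le with m
    have hm : 0 < m := by exact_mod_cast h
    rw [pw, pw, if_pos (by positivity), if_pos (by omega)]
    have h2 : ((m : ℤ) - 1).toNat = m - 1 := by omega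
    rw [Int.toNat_natCast, h2, mul_one_div,
      div_eq_div_iff (by positivity) (by positivity), one_mul]
    exact_mod_cast Nat.mul_factorial_pred hm.ne'

lemma pw_neg {e : ℤ} (h : e < 0) : pw e = 0 := by rw [pw, if_neg (by omega)]

lemma pw_zero : pw 0 = 1 := by simp [pw]

open Finset in
/-- Key algebraic identity replacing differentiation: multiplying the determinant by the
total exponent equals the sum of determinants with one column's exponents shifted down. -/
lemma det_pw_shift {N : ℕ} (x y : Fin N → ℤ) :
    ((∑ b, y b - ∑ a, x a : ℤ) : ℝ) * Matrix.det (fun a b => pw (y b - x a)) =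
    ∑ b0 : Fin N, Matrix.det (fun a b : Fin N => pw ((if b = b0 then y b - 1 else y b) - x a)) := by
  show _ * Matrix.det (Matrix.of fun a b => pw (y b - x a)) =
    ∑ b0 : Fin N, Matrix.det (Matrix.of fun a b : Fin N => pw ((if b = b0 then y b - 1 else y b) - x a))
  simp only [Matrix.det_apply', Matrix.of_apply, Finset.mul_sum]
  rw [Finset.sum_comm]
  refine Finset.sum_congr rfl fun σ _ => ?_
  have hprod : ∀ b0 : Fin N, (∏ i, pw ((if i = b0 then y i - 1 else y i) - x (σ i))) =
      ((y b0 - x (σ b0) : ℤ) : ℝ) * ∏ i, pw (y i - x (σ i)) := by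
    intro b0
    rw [← Finset.mul_prod_erase univ (fun i => pw (y i - x (σ i))) (mem_univ b0), ← mul_assoc,
      ← Finset.mul_prod_erase univ (fun i => pw ((if i = b0 then y i - 1 else y i) - x (σ i)))
        (mem_univ b0)]
    congr 1
    · rw [if_pos rfl, pw_key, sub_sub, sub_sub, add_comm]
    · exact Finset.prod_congr rfl fun i hi => by rw [if_neg (Finset.mem_erase.mp hi).1]
  simp_rw [hprod]
  rw [← Finset.mul_sum, ← Finset.sum_mul, ← Int.cast_sum]
  rw [show (∑ b0 : Fin N, (y b0 - x (σ b0))) = ∑ b, y b - ∑ a, x a by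
    rw [Finset.sum_sub_distrib, Equiv.sum_comp σ x]]
  ring


open Finset

namespace YoungAux

lemma rowLen_eq_of_iff {ν : YoungDiagram} {i m : ℕ} (h : ∀ j, (i, j) ∈ ν ↔ j < m) :
    ν.rowLen i = m := by
  refine le_antisymm ?_ ?_
  · by_contra hlt
    push_neg at hlt
    have := (YoungDiagram.mem_iff_lt_rowLen.mpr hlt : (i, m) ∈ ν)
    exact absurd ((h m).mp this) (lt_irrefl m)
  · rcases Nat.eq_zero_or_pos m with rfl | hm
    · exact Nat.zero_le _
    · have : (i, m - 1) ∈ ν := (h (m - 1)).mpr (by omega)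
      have := YoungDiagram.mem_iff_lt_rowLen.mp this
      omega

lemma rowLen_mono {μ ν : YoungDiagram} (h : μ ≤ ν) (i : ℕ) : μ.rowLen i ≤ ν.rowLen i := by
  by_contra hlt
  push_neg at hlt
  have : (i, ν.rowLen i) ∈ μ := YoungDiagram.mem_iff_lt_rowLen.mpr hlt
  have : (i, ν.rowLen i) ∈ ν := h this
  have := YoungDiagram.mem_iff_lt_rowLen.mp this
  omega

lemma le_of_rowLen_le {μ ν : YoungDiagram} (h : ∀ i, μ.rowLen i ≤ ν.rowLen i) : μ ≤ ν := by
  intro c hc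
  obtain ⟨i, j⟩ := c
  have := YoungDiagram.mem_iff_lt_rowLen.mp hc
  exact YoungDiagram.mem_iff_lt_rowLen.mpr (lt_of_lt_of_le this (h i))

/-- cells of a diagram with at most `N` rows, as a biUnion of rows -/
lemma cells_eq_biUnion {ν : YoungDiagram} {N : ℕ} (hN : ν.rowLen N = 0) :
    ν.cells = (Finset.range N).biUnion ν.row := by
  ext ⟨i, j⟩
  simp only [Finset.mem_biUnion, Finset.mem_range, YoungDiagram.mem_row_iff]
  constructor
  · intro hc
    refine ⟨i, ?_, (YoungDiagram.mem_cells _).mp hc, rfl⟩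
    by_contra hi
    push_neg at hi
    have h1 := YoungDiagram.mem_iff_lt_rowLen.mp ((YoungDiagram.mem_cells _).mp hc)
    have h2 := ν.rowLen_anti N i hi
    omega
  · rintro ⟨i', _, hc, rfl⟩
    exact (YoungDiagram.mem_cells _).mpr hc

lemma card_eq_sum_rowLens {ν : YoungDiagram} {N : ℕ} (hN : ν.rowLen N = 0) :
    ν.card = ∑ i ∈ Finset.range N, ν.rowLen i := by
  rw [show ν.card = ν.cells.card from rfl, cells_eq_biUnion hN, Finset.card_biUnion]
  · exact Finset.sum_congr rfl fun i _ => (ν.rowLen_eq_card).symm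
  · intro a _ b _ hab
    simp only [Finset.disjoint_left, YoungDiagram.mem_row_iff]
    rintro c ⟨_, rfl⟩ ⟨_, h⟩
    exact hab h

/-- removing an outer corner in row `b` -/
def erase (ν : YoungDiagram) (b : ℕ) (h : ν.rowLen (b + 1) < ν.rowLen b) : YoungDiagram where
  cells := ν.cells.erase (b, ν.rowLen b - 1)
  isLowerSet := by
    rintro ⟨I, J⟩ ⟨i, j⟩ ⟨hi, hj⟩ hm
    simp only [Finset.mem_coe, Finset.mem_erase] at hm ⊢
    obtain ⟨hne, hmem⟩ := hm
    have hmem' : (i, j) ∈ ν := ν.isLowerSet ⟨hi, hj⟩ hmem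
    refine ⟨?_, hmem'⟩
    rintro hc
    rw [Prod.mk.injEq] at hc
    obtain ⟨rfl, rfl⟩ := hc
    have hJ : J < ν.rowLen I := YoungDiagram.mem_iff_lt_rowLen.mp hmem
    have hle : ν.rowLen I ≤ ν.rowLen i := ν.rowLen_anti i I hi
    have hIb : I = i := by
      by_contra hne2
      have h1 : i + 1 ≤ I := by omega
      have : ν.rowLen I ≤ ν.rowLen (i + 1) := ν.rowLen_anti (i + 1) I h1
      omega
    subst hIb
    have : J = ν.rowLen I - 1 := by omega
    subst this
    exact hne rfl

lemma mem_erase {ν : YoungDiagram} {b : ℕ} {h : ν.rowLen (b + 1) < ν.rowLen b} {c : ℕ × ℕ} :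
    c ∈ erase ν b h ↔ c ≠ (b, ν.rowLen b - 1) ∧ c ∈ ν := by
  show c ∈ (erase ν b h).cells ↔ _
  simp [erase, YoungDiagram.mem_cells]

lemma erase_rowLen_self (ν : YoungDiagram) (b : ℕ) (h : ν.rowLen (b + 1) < ν.rowLen b) :
    (erase ν b h).rowLen b = ν.rowLen b - 1 := by
  refine rowLen_eq_of_iff fun j => ?_
  rw [mem_erase, YoungDiagram.mem_iff_lt_rowLen]
  constructor
  · rintro ⟨hne, hlt⟩
    rcases Nat.lt_or_ge j (ν.rowLen b - 1) with h' | h'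
    · exact h'
    · have hje : j = ν.rowLen b - 1 := by omega
      exact absurd (by rw [hje]) hne
  · intro hj
    constructor
    · intro hc
      rw [Prod.mk.injEq] at hc
      omega
    · omega

lemma erase_rowLen_ne (ν : YoungDiagram) (b : ℕ) (h : ν.rowLen (b + 1) < ν.rowLen b)
    {i : ℕ} (hi : i ≠ b) : (erase ν b h).rowLen i = ν.rowLen i := by
  refine rowLen_eq_of_iff fun j => ?_
  rw [mem_erase, YoungDiagram.mem_iff_lt_rowLen]
  exact ⟨fun ⟨_, h2⟩ => h2, fun hj => ⟨fun hc => hi (congrArg Prod.fst hc), hj⟩⟩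

lemma erase_le (ν : YoungDiagram) (b : ℕ) (h : ν.rowLen (b + 1) < ν.rowLen b) :
    erase ν b h ≤ ν := fun c hc => (mem_erase.mp hc).2

lemma erase_card (ν : YoungDiagram) (b : ℕ) (h : ν.rowLen (b + 1) < ν.rowLen b) :
    (erase ν b h).card = ν.card - 1 := by
  show ((erase ν b h).cells).card = _
  rw [show (erase ν b h).cells = ν.cells.erase (b, ν.rowLen b - 1) from rfl,
    Finset.card_erase_of_mem]
  rw [YoungDiagram.mem_cells, YoungDiagram.mem_iff_lt_rowLen]
  omega

lemma erase_corner_not_mem (ν : YoungDiagram) (b : ℕ) (h : ν.rowLen (b + 1) < ν.rowLen b) :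
    (b, ν.rowLen b - 1) ∉ erase ν b h := fun hc => (mem_erase.mp hc).1 rfl

lemma corner_mem (ν : YoungDiagram) (b : ℕ) (h : ν.rowLen (b + 1) < ν.rowLen b) :
    (b, ν.rowLen b - 1) ∈ ν := YoungDiagram.mem_iff_lt_rowLen.mpr (by omega)

end YoungAux

namespace SkewAux

open YoungAux

lemma ncard_biUnion {ι α : Type*} (t : Finset ι) (s : ι → Set α) (hfin : ∀ i, (s i).Finite)
    (hdisj : ∀ i ∈ t, ∀ j ∈ t, i ≠ j → Disjoint (s i) (s j)) :
    (⋃ i ∈ t, s i).ncard = ∑ i ∈ t, (s i).ncard := by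
  classical
  induction t using Finset.induction with
  | empty => simp
  | @insert a t ha ih =>
    have hd : Disjoint (s a) (⋃ i ∈ t, s i) := by
      rw [Set.disjoint_iUnion₂_right]
      intro i hi
      exact hdisj a (Finset.mem_insert_self a t) i (Finset.mem_insert_of_mem hi)
        (fun hc => ha (hc ▸ hi))
    rw [Finset.set_biUnion_insert, Finset.sum_insert ha,
      Set.ncard_union_eq hd (hfin a) (Set.Finite.biUnion t.finite_toSet fun i _ => hfin i),
      ih (fun i hi j hj hij =>
        hdisj i (Finset.mem_insert_of_mem hi) j (Finset.mem_insert_of_mem hj) hij)]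

lemma finite_SYT (μ lam : YoungDiagram) : {f : ℕ × ℕ → ℕ | IsSkewSYT μ lam f}.Finite := by
  classical
  set s : Finset (ℕ × ℕ) := lam.cells \ μ.cells with hs
  set n : ℕ := lam.card - μ.card with hn
  have : {f : ℕ × ℕ → ℕ | IsSkewSYT μ lam f} ⊆
      Set.range (fun (g : s → Fin (n + 1)) (c : ℕ × ℕ) => if h : c ∈ s then (g ⟨c, h⟩ : ℕ) else 0) := by
    intro f hf
    have hmap := hf.2.1.mapsTo
    refine ⟨fun c => ⟨f c.1, ?_⟩, funext fun c => ?_⟩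
    · have := hmap (Finset.mem_coe.mpr c.2)
      simp only [Set.mem_Icc] at this
      omega
    · by_cases h : c ∈ s
      · simp [h]
      · simp only [h, dif_neg, not_false_iff]
        exact (hf.1 c h).symm
  exact Set.Finite.subset (Set.finite_range _) this

lemma dimSkew_self (μ : YoungDiagram) : dimSkew μ μ = 1 := by
  have : {f : ℕ × ℕ → ℕ | IsSkewSYT μ μ f} = {fun _ => 0} := by
    ext f
    simp only [Set.mem_setOf_eq, Set.mem_singleton_iff]
    constructor
    · intro hf
      exact funext fun c => hf.1 c (by simp)
    · rintro rfl
      refine ⟨fun c _ => rfl, ?_, ?_, ?_⟩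
      · rw [Finset.sdiff_self, Nat.sub_self]
        simp only [Finset.coe_empty]
        rw [Set.Icc_eq_empty (by omega)]
        exact Set.bijOn_empty _
      · intro i j1 j2 h1 _ _; rw [Finset.sdiff_self] at h1; exact absurd h1 (Finset.notMem_empty _)
      · intro i1 i2 j h1 _ _; rw [Finset.sdiff_self] at h1; exact absurd h1 (Finset.notMem_empty _)
  rw [dimSkew, this, Set.ncard_singleton]

section Rec

variable (μ lam : YoungDiagram)

/-- cells of the skew shape -/
def cd (μ lam : YoungDiagram) : Finset (ℕ × ℕ) := lam.cells \ μ.cells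

lemma mem_cd {c : ℕ × ℕ} : c ∈ cd μ lam ↔ c ∈ lam ∧ c ∉ μ := by
  simp [cd, Finset.mem_sdiff, YoungDiagram.mem_cells]

lemma card_cd (hsub : μ ≤ lam) : (cd μ lam).card = lam.card - μ.card :=
  Finset.card_sdiff_of_subset (YoungDiagram.cells_subset_iff.mpr hsub)

lemma card_le (hsub : μ ≤ lam) : μ.card ≤ lam.card :=
  Finset.card_le_card (YoungDiagram.cells_subset_iff.mpr hsub)

/-- The set of SYT of shape lam/μ whose maximal entry sits at the end of row `b`. -/
def SYTtop (b : ℕ) : Set (ℕ × ℕ → ℕ) :=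
  {f | IsSkewSYT μ lam f ∧ f (b, lam.rowLen b - 1) = lam.card - μ.card}

lemma top_cell_mem {f : ℕ × ℕ → ℕ} (hf : IsSkewSYT μ lam f) {c : ℕ × ℕ}
    (hc : f c = lam.card - μ.card) (hn : 1 ≤ lam.card - μ.card) : c ∈ cd μ lam := by
  by_contra h
  have := hf.1 c h
  omega

/-- In an SYT, the cell carrying the top value `n` is an outer corner. -/
lemma top_cell_corner {f : ℕ × ℕ → ℕ} (hf : IsSkewSYT μ lam f) {i j : ℕ}
    (hc : f (i, j) = lam.card - μ.card) (hn : 1 ≤ lam.card - μ.card)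
    (hmem : (i, j) ∈ cd μ lam) :
    j = lam.rowLen i - 1 ∧ lam.rowLen (i + 1) < lam.rowLen i := by
  have hij : (i, j) ∈ lam ∧ (i, j) ∉ μ := (mem_cd μ lam).mp hmem
  have hjr : j < lam.rowLen i := YoungDiagram.mem_iff_lt_rowLen.mp hij.1
  constructor
  · by_contra hne
    have h1 : (i, j + 1) ∈ lam := YoungDiagram.mem_iff_lt_rowLen.mpr (by omega)
    have h2 : (i, j + 1) ∉ μ := fun hm => hij.2 (μ.up_left_mem le_rfl (by omega) hm)
    have h3 : (i, j + 1) ∈ cd μ lam := (mem_cd μ lam).mpr ⟨h1, h2⟩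
    have h4 := hf.2.2.1 i j (j + 1) hmem h3 (by omega)
    have h5 := hf.2.1.mapsTo (Finset.mem_coe.mpr h3)
    simp only [Set.mem_Icc] at h5
    omega
  · by_contra hne
    have heq : lam.rowLen (i + 1) = lam.rowLen i := by
      have := lam.rowLen_anti i (i + 1) (by omega); omega
    have h1 : (i + 1, j) ∈ lam := YoungDiagram.mem_iff_lt_rowLen.mpr (by omega)
    have h2 : (i + 1, j) ∉ μ := fun hm => hij.2 (μ.up_left_mem (by omega) le_rfl hm)
    have h3 : (i + 1, j) ∈ cd μ lam := (mem_cd μ lam).mpr ⟨h1, h2⟩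
    have h4 := hf.2.2.2 i (i + 1) j hmem h3 (by omega)
    have h5 := hf.2.1.mapsTo (Finset.mem_coe.mpr h3)
    simp only [Set.mem_Icc] at h5
    omega

lemma cd_erase (b : ℕ) (h : lam.rowLen (b + 1) < lam.rowLen b) :
    cd μ (YoungAux.erase lam b h) = (cd μ lam).erase (b, lam.rowLen b - 1) := by
  ext c
  simp only [mem_cd, cd, Finset.mem_erase, Finset.mem_sdiff, YoungDiagram.mem_cells]
  rw [YoungAux.mem_erase]
  tauto

lemma sytop_ncard (b : ℕ) (h : lam.rowLen (b + 1) < lam.rowLen b)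
    (hsub : μ ≤ lam) (hpt : (b, lam.rowLen b - 1) ∉ μ) :
    (SYTtop μ lam b).ncard = dimSkew μ (YoungAux.erase lam b h) := by
  classical
  set L := lam.rowLen b with hL
  set pt : ℕ × ℕ := (b, L - 1) with hpt_def
  set n := lam.card - μ.card with hn_def
  have hptlam : pt ∈ lam := YoungAux.corner_mem lam b h
  have hptcd : pt ∈ cd μ lam := (mem_cd μ lam).mpr ⟨hptlam, hpt⟩
  have hcardlt : μ.card < lam.card := by
    have h1 : μ.cells ⊂ lam.cells :=
      Finset.ssubset_iff_of_subset (YoungDiagram.cells_subset_iff.mpr hsub) |>.mpr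
        ⟨pt, (Finset.mem_sdiff.mp hptcd).1, (Finset.mem_sdiff.mp hptcd).2⟩
    exact Finset.card_lt_card h1
  have hn : 1 ≤ n := by omega
  set lam' := YoungAux.erase lam b h with hlam'
  have hsub' : μ ≤ lam' := by
    intro c hc
    exact YoungAux.mem_erase.mpr ⟨fun hceq => hpt (by rwa [hceq] at hc), hsub hc⟩
  have hcard' : lam'.card = lam.card - 1 := YoungAux.erase_card lam b h
  have hn' : lam'.card - μ.card = n - 1 := by omega
  have hcd' : cd μ lam' = (cd μ lam).erase pt := cd_erase μ lam b h
  have hpt_not_cd' : pt ∉ cd μ lam' := by rw [hcd']; exact Finset.notMem_erase _ _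
  have hcd'_sub : ∀ c, c ∈ cd μ lam' → c ≠ pt ∧ c ∈ cd μ lam := by
    intro c hc; rw [hcd', Finset.mem_erase] at hc; exact hc
  set F : (ℕ × ℕ → ℕ) → (ℕ × ℕ → ℕ) := fun f => Function.update f pt 0 with hF
  have hinj : Set.InjOn F (SYTtop μ lam b) := by
    intro f1 hf1 f2 hf2 heq
    funext c
    by_cases hc : c = pt
    · subst hc; rw [hf1.2, hf2.2]
    · have := congrFun heq c
      simpa only [hF, Function.update_of_ne hc] using this
  have himg : F '' (SYTtop μ lam b) = {g | IsSkewSYT μ lam' g} := by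
    apply Set.Subset.antisymm
    · rintro _ ⟨f, ⟨hf, hfn⟩, rfl⟩
      obtain ⟨h0, hbij, hrow, hcol⟩ := hf
      have hupd : ∀ c ∈ cd μ lam', F f c = f c := fun c hc =>
        Function.update_of_ne (hcd'_sub c hc).1 _ _
      have hne_n : ∀ c ∈ cd μ lam', f c ≠ n := by
        intro c hc hceq
        exact (hcd'_sub c hc).1
          (hbij.injOn (Finset.mem_coe.mpr (hcd'_sub c hc).2) (Finset.mem_coe.mpr hptcd)
            (by rw [hceq, hfn]))
      refine ⟨?_, ⟨?_, ?_, ?_⟩, ?_, ?_⟩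
      · intro c hc
        by_cases hcpt : c = pt
        · subst hcpt; exact Function.update_self _ _ _
        · rw [hF]; simp only [Function.update_of_ne hcpt]
          refine h0 c fun hccd => hc ?_
          show c ∈ cd μ lam'
          rw [hcd']; exact Finset.mem_erase.mpr ⟨hcpt, hccd⟩
      · intro c hc
        rw [Finset.mem_coe] at hc
        rw [hupd c hc]
        have h1 := hbij.mapsTo (Finset.mem_coe.mpr (hcd'_sub c hc).2)
        have h2 := hne_n c hc
        simp only [Set.mem_Icc] at h1 ⊢
        omega
      · intro c1 hc1 c2 hc2 heq
        rw [Finset.mem_coe] at hc1 hc2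
        rw [hupd c1 hc1, hupd c2 hc2] at heq
        exact hbij.injOn (Finset.mem_coe.mpr (hcd'_sub c1 hc1).2)
          (Finset.mem_coe.mpr (hcd'_sub c2 hc2).2) heq
      · intro k hk
        simp only [Set.mem_Icc] at hk
        obtain ⟨c, hc, hfc⟩ := hbij.surjOn (Set.mem_Icc.mpr ⟨hk.1, by omega⟩ :
          k ∈ Set.Icc 1 (lam.card - μ.card))
        rw [Finset.mem_coe] at hc
        have hcne : c ≠ pt := by
          intro hceq; subst hceq; rw [hfn] at hfc; omega
        have hc' : c ∈ cd μ lam' := by rw [hcd']; exact Finset.mem_erase.mpr ⟨hcne, hc⟩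
        exact ⟨c, Finset.mem_coe.mpr hc', by rw [hupd c hc']; exact hfc⟩
      · intro i j1 j2 h1 h2 hlt
        rw [hupd _ h1, hupd _ h2]
        exact hrow i j1 j2 (hcd'_sub _ h1).2 (hcd'_sub _ h2).2 hlt
      · intro i1 i2 j h1 h2 hlt
        rw [hupd _ h1, hupd _ h2]
        exact hcol i1 i2 j (hcd'_sub _ h1).2 (hcd'_sub _ h2).2 hlt
    · intro g hg
      obtain ⟨h0, hbij, hrow, hcol⟩ := hg
      have hgpt : g pt = 0 := h0 pt hpt_not_cd'
      set f : ℕ × ℕ → ℕ := Function.update g pt n with hf_def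
      have hfpt : f pt = n := Function.update_self _ _ _
      have hfoff : ∀ c, c ≠ pt → f c = g c := fun c hc => Function.update_of_ne hc _ _
      have hglt : ∀ c ∈ cd μ lam', 1 ≤ g c ∧ g c ≤ n - 1 := by
        intro c hc
        have := hbij.mapsTo (Finset.mem_coe.mpr hc)
        rw [Set.mem_Icc, hn'] at this
        exact this
      have hmem_cd : ∀ c, c ∈ cd μ lam' → c ∈ cd μ lam := fun c hc => (hcd'_sub c hc).2
      have hmem_cd' : ∀ c, c ∈ cd μ lam → c ≠ pt → c ∈ cd μ lam' := by
        intro c hc hne; rw [hcd']; exact Finset.mem_erase.mpr ⟨hne, hc⟩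
      refine ⟨f, ⟨⟨?_, ⟨?_, ?_, ?_⟩, ?_, ?_⟩, hfpt⟩, ?_⟩
      · intro c hc
        have hcne : c ≠ pt := fun hceq => hc (hceq ▸ hptcd)
        rw [hfoff c hcne]
        exact h0 c fun hc' => hc (hmem_cd c hc')
      · intro c hc
        rw [Finset.mem_coe] at hc
        by_cases hcpt : c = pt
        · subst hcpt; rw [hfpt]; exact Set.mem_Icc.mpr ⟨hn, le_rfl⟩
        · have := hglt c (hmem_cd' c hc hcpt)
          rw [hfoff c hcpt]
          exact Set.mem_Icc.mpr ⟨this.1, by omega⟩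
      · intro c1 hc1 c2 hc2 heq
        rw [Finset.mem_coe] at hc1 hc2
        by_cases h1 : c1 = pt <;> by_cases h2 : c2 = pt
        · rw [h1, h2]
        · exfalso
          rw [h1, hfpt, hfoff c2 h2] at heq
          have := hglt c2 (hmem_cd' c2 hc2 h2); omega
        · exfalso
          rw [h2, hfpt, hfoff c1 h1] at heq
          have := hglt c1 (hmem_cd' c1 hc1 h1); omega
        · rw [hfoff c1 h1, hfoff c2 h2] at heq
          exact hbij.injOn (Finset.mem_coe.mpr (hmem_cd' c1 hc1 h1))
            (Finset.mem_coe.mpr (hmem_cd' c2 hc2 h2)) heq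
      · intro k hk
        rw [Set.mem_Icc] at hk
        by_cases hkn : k = n
        · exact ⟨pt, Finset.mem_coe.mpr hptcd, by rw [hfpt, hkn]⟩
        · obtain ⟨c, hc, hgc⟩ := hbij.surjOn (by rw [Set.mem_Icc, hn']; omega :
            k ∈ Set.Icc 1 (lam'.card - μ.card))
          rw [Finset.mem_coe] at hc
          refine ⟨c, Finset.mem_coe.mpr (hmem_cd c hc), ?_⟩
          rw [hfoff c (hcd'_sub c hc).1]; exact hgc
      · intro i j1 j2 h1 h2 hlt
        have h2lam : (i, j2) ∈ lam := ((mem_cd μ lam).mp h2).1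
        have h1pt : (i, j1) ≠ pt := by
          intro hc
          rw [Prod.mk.injEq] at hc
          obtain ⟨rfl, rfl⟩ := hc
          have := YoungDiagram.mem_iff_lt_rowLen.mp h2lam
          omega
        by_cases h2pt : (i, j2) = pt
        · rw [hfoff _ h1pt, h2pt, hfpt]
          have := hglt _ (hmem_cd' _ h1 h1pt); omega
        · rw [hfoff _ h1pt, hfoff _ h2pt]
          exact hrow i j1 j2 (hmem_cd' _ h1 h1pt) (hmem_cd' _ h2 h2pt) hlt
      · intro i1 i2 j h1 h2 hlt
        have h2lam : (i2, j) ∈ lam := ((mem_cd μ lam).mp h2).1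
        have h1pt : (i1, j) ≠ pt := by
          intro hc
          rw [Prod.mk.injEq] at hc
          obtain ⟨rfl, rfl⟩ := hc
          have hr2 : lam.rowLen i2 ≤ lam.rowLen (i1 + 1) := lam.rowLen_anti _ _ (by omega)
          have := YoungDiagram.mem_iff_lt_rowLen.mp h2lam
          omega
        by_cases h2pt : (i2, j) = pt
        · rw [hfoff _ h1pt, h2pt, hfpt]
          have := hglt _ (hmem_cd' _ h1 h1pt); omega
        · rw [hfoff _ h1pt, hfoff _ h2pt]
          exact hcol i1 i2 j (hmem_cd' _ h1 h1pt) (hmem_cd' _ h2 h2pt) hlt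
      · rw [hF]
        simp only
        rw [Function.update_idem]
        funext c
        by_cases hc : c = pt
        · subst hc; rw [Function.update_self, hgpt]
        · rw [Function.update_of_ne hc]
  rw [dimSkew, ← himg, Set.ncard_image_of_injOn hinj]


lemma sytop_empty_not_corner (b : ℕ) (hnc : ¬ lam.rowLen (b + 1) < lam.rowLen b)
    (hn : 1 ≤ lam.card - μ.card) : SYTtop μ lam b = ∅ := by
  ext f
  simp only [SYTtop, Set.mem_setOf_eq, Set.mem_empty_iff_false, iff_false, not_and]
  intro hf hfn
  have hptcd : (b, lam.rowLen b - 1) ∈ cd μ lam := top_cell_mem μ lam hf hfn hn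
  have := (top_cell_corner μ lam hf hfn hn hptcd).2
  omega

lemma sytop_empty_mem (b : ℕ) (hmem : (b, lam.rowLen b - 1) ∈ μ)
    (hn : 1 ≤ lam.card - μ.card) : SYTtop μ lam b = ∅ := by
  ext f
  simp only [SYTtop, Set.mem_setOf_eq, Set.mem_empty_iff_false, iff_false, not_and]
  intro hf hfn
  exact ((mem_cd μ lam).mp (top_cell_mem μ lam hf hfn hn)).2 hmem

lemma sytop_finite (b : ℕ) : (SYTtop μ lam b).Finite :=
  (finite_SYT μ lam).subset fun _ hf => hf.1

lemma dimSkew_eq_sum (N : ℕ) (hlamN : lam.rowLen N = 0) (hsub : μ ≤ lam) (hne : μ ≠ lam) :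
    dimSkew μ lam = ∑ b : Fin N, (SYTtop μ lam (b : ℕ)).ncard := by
  classical
  have hcardle : μ.card ≤ lam.card := card_le μ lam hsub
  have hn : 1 ≤ lam.card - μ.card := by
    rcases Nat.lt_or_ge μ.card lam.card with h | h
    · omega
    · exfalso
      apply hne
      have hcells : μ.cells = lam.cells :=
        Finset.eq_of_subset_of_card_le (YoungDiagram.cells_subset_iff.mpr hsub) h
      exact SetLike.ext fun c =>
        ⟨fun hc => (YoungDiagram.mem_cells c).mp (hcells ▸ (YoungDiagram.mem_cells c).mpr hc),
         fun hc => (YoungDiagram.mem_cells c).mp (hcells ▸ (YoungDiagram.mem_cells c).mpr hc)⟩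
  have hunion : {f : ℕ × ℕ → ℕ | IsSkewSYT μ lam f} = ⋃ b ∈ (Finset.univ : Finset (Fin N)),
      SYTtop μ lam (b : ℕ) := by
    apply Set.Subset.antisymm
    · intro f hf
      have hnmem : (lam.card - μ.card) ∈ Set.Icc 1 (lam.card - μ.card) :=
        Set.mem_Icc.mpr ⟨hn, le_rfl⟩
      obtain ⟨c, hc, hfc⟩ := hf.2.1.surjOn hnmem
      obtain ⟨i, j⟩ := c
      rw [Finset.mem_coe] at hc
      have hcd : (i, j) ∈ cd μ lam := hc
      have hlam : (i, j) ∈ lam := ((mem_cd μ lam).mp hcd).1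
      have hiN : i < N := by
        by_contra hge
        have h1 := YoungDiagram.mem_iff_lt_rowLen.mp hlam
        have h2 := lam.rowLen_anti N i (by omega)
        omega
      obtain ⟨hj, _⟩ := top_cell_corner μ lam hf hfc hn hcd
      subst hj
      exact Set.mem_biUnion (Finset.mem_univ (⟨i, hiN⟩ : Fin N)) ⟨hf, hfc⟩
    · intro f hf
      simp only [Set.mem_iUnion] at hf
      obtain ⟨b, _, hb⟩ := hf
      exact hb.1
  have hdisj : ∀ b1 ∈ (Finset.univ : Finset (Fin N)), ∀ b2 ∈ (Finset.univ : Finset (Fin N)),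
      b1 ≠ b2 → Disjoint (SYTtop μ lam (b1 : ℕ)) (SYTtop μ lam (b2 : ℕ)) := by
    intro b1 _ b2 _ hb12
    rw [Set.disjoint_left]
    intro f hf1 hf2
    have hc1 : ((b1 : ℕ), lam.rowLen b1 - 1) ∈ cd μ lam := top_cell_mem μ lam hf1.1 hf1.2 hn
    have hc2 : ((b2 : ℕ), lam.rowLen b2 - 1) ∈ cd μ lam := top_cell_mem μ lam hf2.1 hf2.2 hn
    have := hf1.1.2.1.injOn (Finset.mem_coe.mpr hc1) (Finset.mem_coe.mpr hc2)
      (by rw [hf1.2, hf2.2])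
    apply hb12
    have := congrArg Prod.fst this
    exact Fin.ext this
  rw [dimSkew, hunion]
  exact ncard_biUnion Finset.univ (fun b : Fin N => SYTtop μ lam (b : ℕ))
    (fun b => sytop_finite μ lam (b : ℕ)) hdisj

open Finset in
lemma dimSkew_rec (N : ℕ) (hlamN : lam.rowLen N = 0) (hsub : μ ≤ lam) (hne : μ ≠ lam) :
    dimSkew μ lam = ∑ b : Fin N, (if h : lam.rowLen ((b : ℕ) + 1) < lam.rowLen (b : ℕ) then
      (if ((b : ℕ), lam.rowLen (b : ℕ) - 1) ∈ μ then 0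
        else dimSkew μ (YoungAux.erase lam (b : ℕ) h))
      else 0) := by
  classical
  have hcardle : μ.card ≤ lam.card := card_le μ lam hsub
  have hn : 1 ≤ lam.card - μ.card := by
    rcases Nat.lt_or_ge μ.card lam.card with h | h
    · omega
    · exfalso
      apply hne
      have hcells : μ.cells = lam.cells :=
        Finset.eq_of_subset_of_card_le (YoungDiagram.cells_subset_iff.mpr hsub) h
      exact SetLike.ext fun c =>
        ⟨fun hc => (YoungDiagram.mem_cells c).mp (hcells ▸ (YoungDiagram.mem_cells c).mpr hc),
         fun hc => (YoungDiagram.mem_cells c).mp (hcells ▸ (YoungDiagram.mem_cells c).mpr hc)⟩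
  rw [dimSkew_eq_sum μ lam N hlamN hsub hne]
  refine Finset.sum_congr rfl fun b _ => ?_
  by_cases hc : lam.rowLen ((b : ℕ) + 1) < lam.rowLen (b : ℕ)
  · rw [dif_pos hc]
    by_cases hmem : ((b : ℕ), lam.rowLen (b : ℕ) - 1) ∈ μ
    · rw [if_pos hmem, sytop_empty_mem μ lam (b : ℕ) hmem hn, Set.ncard_empty]
    · rw [if_neg hmem, sytop_ncard μ lam (b : ℕ) hc hsub hmem]
  · rw [dif_neg hc, sytop_empty_not_corner μ lam (b : ℕ) hc hn, Set.ncard_empty]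


end Rec

end SkewAux

section DetSide

open Finset

/-- The Karlin–McGregor style weight matrix. -/
noncomputable def Wmat (N : ℕ) (μ lam : YoungDiagram) : Matrix (Fin N) (Fin N) ℝ :=
  fun a b => pw (((lam.rowLen (b : ℕ) : ℤ) - ((b : ℕ) + 1)) - ((μ.rowLen (a : ℕ) : ℤ) - ((a : ℕ) + 1)))

lemma detW_self (N : ℕ) (μ : YoungDiagram) : (Wmat N μ μ).det = 1 := by
  have htri : (Wmat N μ μ).BlockTriangular OrderDual.toDual := by
    intro a b hab
    have hab' : (a : ℕ) < (b : ℕ) := hab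
    have hle : μ.rowLen (b : ℕ) ≤ μ.rowLen (a : ℕ) := μ.rowLen_anti _ _ hab'.le
    exact pw_neg (by push_cast; omega)
  rw [Matrix.det_of_lowerTriangular _ htri]
  have : ∀ a : Fin N, Wmat N μ μ a a = 1 := fun a => by
    show pw _ = 1
    rw [show ((μ.rowLen (a : ℕ) : ℤ) - ((a : ℕ) + 1)) - ((μ.rowLen (a : ℕ) : ℤ) - ((a : ℕ) + 1))
      = 0 by ring, pw_zero]
  simp [this]

lemma detW_not_le (N : ℕ) (μ lam : YoungDiagram) (hμN : μ.rowLen N = 0)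
    (h : ¬ μ ≤ lam) : (Wmat N μ lam).det = 0 := by
  have hex : ∃ i, lam.rowLen i < μ.rowLen i := by
    by_contra hc
    push_neg at hc
    exact h (YoungAux.le_of_rowLen_le fun i => hc i)
  obtain ⟨i0, hi0⟩ := hex
  have hi0N : i0 < N := by
    by_contra hge
    have := μ.rowLen_anti N i0 (by omega)
    omega
  set b0 : Fin N := ⟨i0, hi0N⟩ with hb0
  rw [Matrix.det_apply']
  refine Finset.sum_eq_zero fun σ _ => ?_
  -- find a column c ≥ b0 with σ c ≤ b0
  have hpig : ∃ c : Fin N, b0 ≤ c ∧ σ c ≤ b0 := by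
    by_contra hc
    push_neg at hc
    have hmaps : ∀ c ∈ Finset.Ici b0, σ c ∈ Finset.Ioi b0 := by
      intro c hcmem
      rw [Finset.mem_Ici] at hcmem
      rw [Finset.mem_Ioi]
      exact hc c hcmem
    have hcard := Finset.card_le_card_of_injOn σ hmaps
      (Set.injOn_of_injective σ.injective)
    rw [Fin.card_Ici, Fin.card_Ioi] at hcard
    simp only [hb0] at hcard
    omega
  obtain ⟨c, hbc, hcb⟩ := hpig
  refine mul_eq_zero_of_right _ (Finset.prod_eq_zero (Finset.mem_univ c) ?_)
  show pw _ = 0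
  have h1 : lam.rowLen (c : ℕ) ≤ lam.rowLen i0 := lam.rowLen_anti _ _ hbc
  have h2 : μ.rowLen i0 ≤ μ.rowLen ((σ c : Fin N) : ℕ) := μ.rowLen_anti _ _ hcb
  have h3 : (i0 : ℕ) ≤ (c : ℕ) := hbc
  have h4 : ((σ c : Fin N) : ℕ) ≤ i0 := hcb
  exact pw_neg (by push_cast; omega)

open scoped Classical in
lemma detW_eq (N : ℕ) (μ : YoungDiagram) (hμN : μ.rowLen N = 0) :
    ∀ (lam : YoungDiagram), lam.rowLen N = 0 →
      (Wmat N μ lam).det = if μ ≤ lam then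
        (dimSkew μ lam : ℝ) / (Nat.factorial (lam.card - μ.card) : ℝ) else 0 := by
  classical
  suffices H : ∀ (k : ℕ) (lam : YoungDiagram), lam.card < k → lam.rowLen N = 0 →
      (Wmat N μ lam).det = if μ ≤ lam then
        (dimSkew μ lam : ℝ) / (Nat.factorial (lam.card - μ.card) : ℝ) else 0 by
    intro lam hlamN
    exact H (lam.card + 1) lam (by omega) hlamN
  intro k
  induction k with
  | zero => intro lam hcard; omega
  | succ k ih =>
    intro lam hcard hlamN
    by_cases hsub : μ ≤ lam
    · by_cases heq : μ = lam
      · subst heq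
        rw [if_pos hsub, Nat.sub_self, Nat.factorial_zero, SkewAux.dimSkew_self]
        simp [detW_self]
      · -- inductive step
        have hcardlt : μ.card < lam.card := by
          have hle := SkewAux.card_le μ lam hsub
          rcases Nat.lt_or_ge μ.card lam.card with h | h
          · exact h
          · exfalso
            apply heq
            have hcells : μ.cells = lam.cells :=
              Finset.eq_of_subset_of_card_le (YoungDiagram.cells_subset_iff.mpr hsub) h
            exact SetLike.ext fun c =>
              ⟨fun hc => (YoungDiagram.mem_cells c).mp (hcells ▸ (YoungDiagram.mem_cells c).mpr hc),
               fun hc => (YoungDiagram.mem_cells c).mp (hcells ▸ (YoungDiagram.mem_cells c).mpr hc)⟩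
        set n : ℕ := lam.card - μ.card with hn_def
        have hn : 1 ≤ n := by omega
        set x : Fin N → ℤ := fun a => (μ.rowLen (a : ℕ) : ℤ) - ((a : ℕ) + 1) with hx
        set y : Fin N → ℤ := fun b => (lam.rowLen (b : ℕ) : ℤ) - ((b : ℕ) + 1) with hy
        have hsum : (∑ b, y b - ∑ a, x a : ℤ) = (n : ℤ) := by
          have h1 : (lam.card : ℤ) = ∑ b : Fin N, (lam.rowLen (b : ℕ) : ℤ) := by
            rw [YoungAux.card_eq_sum_rowLens hlamN]
            push_cast
            rw [Finset.sum_range fun i => (lam.rowLen i : ℤ)]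
          have h2 : (μ.card : ℤ) = ∑ a : Fin N, (μ.rowLen (a : ℕ) : ℤ) := by
            rw [YoungAux.card_eq_sum_rowLens hμN]
            push_cast
            rw [Finset.sum_range fun i => (μ.rowLen i : ℤ)]
          simp only [hx, hy, Finset.sum_sub_distrib]
          rw [← h1, ← h2]
          push_cast [hn_def]
          omega
        have hkey := det_pw_shift x y
        rw [hsum] at hkey
        have hWx : Matrix.det (fun a b => pw (y b - x a)) = (Wmat N μ lam).det := rfl
        -- evaluate each shifted determinant
        have hterm : ∀ b0 : Fin N,
            Matrix.det (fun a b : Fin N => pw ((if b = b0 then y b - 1 else y b) - x a)) =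
            (if h : lam.rowLen ((b0 : ℕ) + 1) < lam.rowLen (b0 : ℕ) then
              (if μ ≤ YoungAux.erase lam (b0 : ℕ) h then
                (dimSkew μ (YoungAux.erase lam (b0 : ℕ) h) : ℝ) /
                  (Nat.factorial ((YoungAux.erase lam (b0 : ℕ) h).card - μ.card) : ℝ) else 0)
              else 0) := by
          intro b0
          by_cases hc : lam.rowLen ((b0 : ℕ) + 1) < lam.rowLen (b0 : ℕ)
          · rw [dif_pos hc]
            have hmat : (fun a b : Fin N => pw ((if b = b0 then y b - 1 else y b) - x a)) =
                Wmat N μ (YoungAux.erase lam (b0 : ℕ) hc) := by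
              funext a b
              show pw _ = pw _
              congr 1
              by_cases hbb : b = b0
              · subst hbb
                have h1 : 1 ≤ lam.rowLen (b : ℕ) := by omega
                rw [if_pos rfl, hy, YoungAux.erase_rowLen_self lam (b : ℕ) hc,
                  Nat.cast_sub h1]
                push_cast
                ring
              · rw [if_neg hbb, hy,
                  YoungAux.erase_rowLen_ne lam (b0 : ℕ) hc (fun hcc => hbb (Fin.ext hcc))]
            rw [hmat]
            have hcard' : (YoungAux.erase lam (b0 : ℕ) hc).card = lam.card - 1 :=
              YoungAux.erase_card lam (b0 : ℕ) hc
            have hrowN : (YoungAux.erase lam (b0 : ℕ) hc).rowLen N = 0 := by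
              have := YoungAux.rowLen_mono (YoungAux.erase_le lam (b0 : ℕ) hc) N
              omega
            exact ih (YoungAux.erase lam (b0 : ℕ) hc) (by omega) hrowN
          · rw [dif_neg hc]
            have heqr : lam.rowLen ((b0 : ℕ) + 1) = lam.rowLen (b0 : ℕ) := by
              have := lam.rowLen_anti (b0 : ℕ) ((b0 : ℕ) + 1) (by omega)
              omega
            by_cases hbN : (b0 : ℕ) + 1 < N
            · refine Matrix.det_zero_of_column_eq (show b0 ≠ ⟨(b0 : ℕ) + 1, hbN⟩ from ?_) ?_
              · intro hcc
                have := congrArg Fin.val hcc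
                simp at this
              · intro a
                show pw _ = pw _
                congr 1
                rw [if_pos rfl, if_neg (show (⟨(b0 : ℕ) + 1, hbN⟩ : Fin N) ≠ b0 from fun hcc => by
                  have := congrArg Fin.val hcc; simp at this)]
                simp only [hy, Fin.val_mk, heqr]
                push_cast
                ring
            · have hbN' : (b0 : ℕ) + 1 = N := by omega
              have hlam0 : lam.rowLen (b0 : ℕ) = 0 := by rw [← heqr, hbN', hlamN]
              refine Matrix.det_eq_zero_of_column_eq_zero b0 fun a => ?_
              show pw _ = 0
              rw [if_pos rfl]
              refine pw_neg ?_
              simp only [hy, hx, hlam0]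
              have : (a : ℕ) < N := a.isLt
              push_cast
              omega
        -- assemble
        rw [if_pos hsub]
        have hrec := SkewAux.dimSkew_rec μ lam N hlamN hsub heq
        have hbridge : ∀ b0 : Fin N,
            (if h : lam.rowLen ((b0 : ℕ) + 1) < lam.rowLen (b0 : ℕ) then
              (if μ ≤ YoungAux.erase lam (b0 : ℕ) h then
                (dimSkew μ (YoungAux.erase lam (b0 : ℕ) h) : ℝ) /
                  (Nat.factorial ((YoungAux.erase lam (b0 : ℕ) h).card - μ.card) : ℝ) else 0)
              else 0) =
            ((if h : lam.rowLen ((b0 : ℕ) + 1) < lam.rowLen (b0 : ℕ) then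
              (if ((b0 : ℕ), lam.rowLen (b0 : ℕ) - 1) ∈ μ then 0
                else dimSkew μ (YoungAux.erase lam (b0 : ℕ) h))
              else 0 : ℕ) : ℝ) / (Nat.factorial (n - 1) : ℝ) := by
          intro b0
          by_cases hc : lam.rowLen ((b0 : ℕ) + 1) < lam.rowLen (b0 : ℕ)
          · rw [dif_pos hc, dif_pos hc]
            have hcard' : (YoungAux.erase lam (b0 : ℕ) hc).card - μ.card = n - 1 := by
              have := YoungAux.erase_card lam (b0 : ℕ) hc
              omega
            by_cases hmem : ((b0 : ℕ), lam.rowLen (b0 : ℕ) - 1) ∈ μ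
            · rw [if_neg, if_pos hmem]
              · simp
              · intro hle
                exact YoungAux.erase_corner_not_mem lam (b0 : ℕ) hc (hle hmem)
            · rw [if_pos, if_neg hmem, hcard']
              intro c hcmem
              exact YoungAux.mem_erase.mpr
                ⟨fun hceq => hmem (by rwa [hceq] at hcmem), hsub hcmem⟩
          · rw [dif_neg hc, dif_neg hc]
            simp
        rw [hWx] at hkey
        simp only [hterm, hbridge] at hkey
        rw [← Finset.sum_div, ← Nat.cast_sum, ← hrec] at hkey
        -- hkey : n * det = dimSkew / (n-1)!
        have hfac : (Nat.factorial n : ℝ) = (n : ℝ) * (Nat.factorial (n - 1) : ℝ) := by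
          rw [← Nat.cast_mul]
          congr 1
          have := Nat.mul_factorial_pred (show n ≠ 0 by omega)
          omega
        have hnne : (n : ℝ) ≠ 0 := by positivity
        have hfne : (Nat.factorial (n - 1) : ℝ) ≠ 0 := by positivity
        field_simp [hfac] at hkey ⊢
        push_cast at hkey
        rw [hfac]
        linarith [hkey]
    · rw [if_neg hsub]
      exact detW_not_le N μ lam hμN hsub

end DetSide

open Finset in
lemma det_poisson {N : ℕ} (x y : Fin N → ℤ) (n : ℕ)
    (hsum : (∑ b, y b - ∑ a, x a : ℤ) = (n : ℤ)) (t : ℝ) :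
    Matrix.det (fun a b : Fin N =>
      if 0 ≤ y b - x a then t ^ (y b - x a).toNat / (Nat.factorial (y b - x a).toNat : ℝ) else 0) =
    t ^ n * Matrix.det (fun a b => pw (y b - x a)) := by
  show Matrix.det (Matrix.of fun a b : Fin N =>
      if 0 ≤ y b - x a then t ^ (y b - x a).toNat / (Nat.factorial (y b - x a).toNat : ℝ) else 0) =
    t ^ n * Matrix.det (Matrix.of fun a b => pw (y b - x a))
  rw [Matrix.det_apply', Matrix.det_apply', Finset.mul_sum]
  simp only [Matrix.of_apply]
  refine Finset.sum_congr rfl fun σ _ => ?_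
  by_cases hall : ∀ i, 0 ≤ y i - x (σ i)
  · have hprod : (∏ i, (if 0 ≤ y i - x (σ i) then
        t ^ (y i - x (σ i)).toNat / (Nat.factorial (y i - x (σ i)).toNat : ℝ) else 0)) =
        t ^ n * ∏ i, pw (y i - x (σ i)) := by
      have h1 : ∀ i : Fin N, (if 0 ≤ y i - x (σ i) then
          t ^ (y i - x (σ i)).toNat / (Nat.factorial (y i - x (σ i)).toNat : ℝ) else 0) =
          t ^ (y i - x (σ i)).toNat * pw (y i - x (σ i)) := by
        intro i
        rw [if_pos (hall i), pw, if_pos (hall i), mul_one_div]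
      simp_rw [h1]
      rw [Finset.prod_mul_distrib]
      congr 2
      rw [Finset.prod_pow_eq_pow_sum]
      congr 1
      have : ((∑ i, (y i - x (σ i)).toNat : ℕ) : ℤ) = (n : ℤ) := by
        push_cast
        rw [Finset.sum_congr rfl fun i _ => Int.toNat_of_nonneg (hall i)]
        rw [Finset.sum_sub_distrib, Equiv.sum_comp σ x]
        exact hsum
      exact_mod_cast this
    rw [hprod]; ring
  · push_neg at hall
    obtain ⟨i0, hi0⟩ := hall
    have hz1 : (if 0 ≤ y i0 - x (σ i0) then
        t ^ (y i0 - x (σ i0)).toNat / (Nat.factorial (y i0 - x (σ i0)).toNat : ℝ) else 0) =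
        (0 : ℝ) := if_neg (not_le.mpr hi0)
    have hz2 : pw (y i0 - x (σ i0)) = 0 := pw_neg hi0
    rw [Finset.prod_eq_zero (Finset.mem_univ i0) hz1,
      Finset.prod_eq_zero (Finset.mem_univ i0) hz2]
    ring

/-- Jacobi–Trudi identity at the Plancherel specialization: for Young diagrams
`μ ⊆ λ` with at most `N` rows (rows `1,…,N`, so `λ_b = λ.rowLen (b-1)`), the
`N × N` determinant of Poisson weights `t^{e(a,b)}/e(a,b)!` with
`e(a,b) = (λ_b − b) − (μ_a − a)` (and entry `0` when `e(a,b) < 0`) equals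
`dim(λ/μ) · t^{|λ|−|μ|}/(|λ|−|μ|)!`. -/
theorem jacobi_trudi_plancherel (N : ℕ) (μ lam : YoungDiagram) (hsub : μ ≤ lam)
    (hmurows : μ.rowLen N = 0) (hlamrows : lam.rowLen N = 0) (t : ℝ) :
    Matrix.det (fun a b : Fin N =>
      let e : ℤ := ((lam.rowLen b : ℤ) - ((b : ℕ) + 1)) - ((μ.rowLen a : ℤ) - ((a : ℕ) + 1))
      if 0 ≤ e then t ^ e.toNat / (Nat.factorial e.toNat : ℝ) else 0) =
    (dimSkew μ lam : ℝ) * t ^ (lam.card - μ.card) /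
      (Nat.factorial (lam.card - μ.card) : ℝ) := by
  classical
  have hcardle : μ.card ≤ lam.card := SkewAux.card_le μ lam hsub
  set x : Fin N → ℤ := fun a => (μ.rowLen (a : ℕ) : ℤ) - ((a : ℕ) + 1) with hx
  set y : Fin N → ℤ := fun b => (lam.rowLen (b : ℕ) : ℤ) - ((b : ℕ) + 1) with hy
  have hsum : (∑ b, y b - ∑ a, x a : ℤ) = ((lam.card - μ.card : ℕ) : ℤ) := by
    have h1 : (lam.card : ℤ) = ∑ b : Fin N, (lam.rowLen (b : ℕ) : ℤ) := by
      rw [YoungAux.card_eq_sum_rowLens hlamrows]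
      push_cast
      rw [Finset.sum_range fun i => (lam.rowLen i : ℤ)]
    have h2 : (μ.card : ℤ) = ∑ a : Fin N, (μ.rowLen (a : ℕ) : ℤ) := by
      rw [YoungAux.card_eq_sum_rowLens hmurows]
      push_cast
      rw [Finset.sum_range fun i => (μ.rowLen i : ℤ)]
    simp only [hx, hy, Finset.sum_sub_distrib]
    rw [← h1, ← h2]
    push_cast
    omega
  have h1 := det_poisson x y (lam.card - μ.card) hsum t
  have hW : Matrix.det (fun a b : Fin N => pw (y b - x a)) = (Wmat N μ lam).det := rfl
  rw [hW, detW_eq N μ hmurows lam hlamrows, if_pos hsub] at h1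
  rw [show (fun a b : Fin N =>
      let e : ℤ := ((lam.rowLen b : ℤ) - ((b : ℕ) + 1)) - ((μ.rowLen a : ℤ) - ((a : ℕ) + 1))
      if 0 ≤ e then t ^ e.toNat / (Nat.factorial e.toNat : ℝ) else 0) =
    (fun a b : Fin N =>
      if 0 ≤ y b - x a then t ^ (y b - x a).toNat / (Nat.factorial (y b - x a).toNat : ℝ)
      else 0) from rfl, h1]
  ring
end

section
/- Let p ∈ (0,1), let ι be a finite set, let μ_p be the i.i.d. geometric(p) product measure on ι → ℕ, and let n ∈ ℕ. Then the conditional distribution of μ_p given the event {x : ι → ℕ | ∑_{i∈ι} x(i) = n} is uniform on that finite set: for every x : ι → ℕ with ∑_{i∈ι} x(i) = n, the conditional probability μ_p({x} | {∑ = n}) equals the reciprocal of the binomial coefficient (|ι| + n − 1 choose n). -/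
open MeasureTheory

/-- The geometric distribution with parameter `p`: the measure on `ℕ` with
`P({x}) = (1 − p) · p^x`. -/
noncomputable def geomMeasure (p : ℝ) : Measure ℕ :=
  Measure.count.withDensity (fun x => ENNReal.ofReal ((1 - p) * p ^ x))

/-- The i.i.d. geometric(`p`) product measure on `ι → ℕ` for a finite index set `ι`. -/
noncomputable def geomProdMeasure (p : ℝ) (ι : Type*) [Fintype ι] : Measure (ι → ℕ) :=
  Measure.pi (fun _ : ι => geomMeasure p)

open ProbabilityTheory ENNReal

lemma geomMeasure_singleton (p : ℝ) (k : ℕ) :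
    geomMeasure p {k} = ENNReal.ofReal ((1 - p) * p ^ k) := by
  rw [geomMeasure, withDensity_apply _ (measurableSet_singleton k),
    lintegral_singleton, Measure.count_singleton, mul_one]

instance : SigmaFinite (Measure.count : Measure ℕ) := by
  refine Measure.sigmaFinite_of_countable (Set.countable_range fun k : ℕ => ({k} : Set ℕ)) ?_ ?_
  · rintro s ⟨k, rfl⟩
    simp [Measure.count_singleton]
  · ext k; simp

instance geomMeasure.sigmaFinite (p : ℝ) : SigmaFinite (geomMeasure p) :=
  SigmaFinite.withDensity_of_ne_top (ae_of_all _ fun _ => ENNReal.ofReal_ne_top)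

lemma geomProd_singleton (p : ℝ) (hp : p ∈ Set.Ioo (0 : ℝ) 1)
    {ι : Type*} [Fintype ι] (y : ι → ℕ) :
    geomProdMeasure p ι {y} =
      ENNReal.ofReal ((1 - p) ^ Fintype.card ι * p ^ (∑ i, y i)) := by
  have h1p : (0:ℝ) ≤ 1 - p := by linarith [hp.2]
  rw [geomProdMeasure, show ({y} : Set (ι → ℕ)) = Set.pi Set.univ (fun i => {y i}) by
      ext z; simp [funext_iff, Set.mem_pi], Measure.pi_pi]
  simp_rw [geomMeasure_singleton]
  rw [← ENNReal.ofReal_prod_of_nonneg (fun i _ => mul_nonneg h1p (pow_nonneg hp.1.le _))]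
  congr 1
  rw [Finset.prod_mul_distrib, Finset.prod_const, Finset.prod_pow_eq_pow_sum,
    Finset.card_univ]

/-- Conditioned on the sum of the entries being `n`, i.i.d. geometric(`p`) random
variables are uniformly distributed: each configuration with sum `n` has conditional
probability `1 / (|ι| + n − 1 choose n)`. -/
theorem geomProd_cond_sum_uniform (p : ℝ) (hp : p ∈ Set.Ioo (0 : ℝ) 1)
    (ι : Type*) [Fintype ι] (n : ℕ) (x : ι → ℕ) (hx : ∑ i, x i = n) :
    ProbabilityTheory.cond (geomProdMeasure p ι) {y : ι → ℕ | ∑ i, y i = n} {x} =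
      ((Nat.choose (Fintype.card ι + n - 1) n : ℝ≥0∞))⁻¹ := by
  classical
  set v : ℝ≥0∞ := ENNReal.ofReal ((1 - p) ^ Fintype.card ι * p ^ n) with hv
  have hvpos : (0:ℝ) < (1 - p) ^ Fintype.card ι * p ^ n :=
    mul_pos (pow_pos (by linarith [hp.2]) _) (pow_pos hp.1 _)
  have hv0 : v ≠ 0 := by simpa [hv] using hvpos
  have hvtop : v ≠ ⊤ := ENNReal.ofReal_ne_top
  set F : Finset (ι → ℕ) := Finset.piAntidiag Finset.univ n with hF
  have hsF : {y : ι → ℕ | ∑ i, y i = n} = (F : Set (ι → ℕ)) := by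
    ext y; simp [hF, Finset.mem_piAntidiag]
  have hcard : F.card = Nat.choose (Fintype.card ι + n - 1) n := by
    rw [hF, ← Finset.map_sym_eq_piAntidiag, Finset.card_map, Finset.sym_univ,
      Finset.card_univ, Sym.card_sym_eq_choose]
  have hxF : x ∈ F := by rw [hF, Finset.mem_piAntidiag]; exact ⟨by simpa using hx, by simp⟩
  have hsing : ∀ y ∈ F, geomProdMeasure p ι {y} = v := by
    intro y hy
    rw [hF, Finset.mem_piAntidiag] at hy
    have h1 : ∑ i, y i = n := by simpa using hy.1
    rw [geomProd_singleton p hp y, hv, h1]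
  have hmeas : MeasurableSet ((F : Set (ι → ℕ))) := F.finite_toSet.measurableSet
  have hμF : geomProdMeasure p ι (F : Set (ι → ℕ)) = F.card * v := by
    rw [← Set.biUnion_of_singleton (F : Set (ι → ℕ)), Finset.set_biUnion_coe,
      measure_biUnion_finset ?_ (fun _ _ => measurableSet_singleton _)]
    · rw [Finset.sum_congr rfl hsing, Finset.sum_const, nsmul_eq_mul]
    · intro a _ b _ hab
      simp [Function.onFun, Set.disjoint_singleton, hab]
  rw [hsF, ProbabilityTheory.cond_apply hmeas,
    Set.inter_eq_self_of_subset_right (by simpa using hxF), hμF,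
    hsing x hxF, ENNReal.mul_inv (Or.inr hvtop) (Or.inl (ENNReal.natCast_ne_top _)),
    mul_assoc, ENNReal.inv_mul_cancel hv0 hvtop, mul_one, hcard]
end

section
/- For every k ≥ 1 and every real q with 0 ≤ q < 1, the family indexed by all Young diagrams ν with terms Dim_k(ν)²·q^{|ν|} has sum (1 − q)^{−k²} (HasSum). This is the normalization identity for the time-zero marginal of the Geometric RSK process built from k² i.i.d. geometric(q) random variables. -/
open scoped ENNReal NNReal

/-- A function `f : ℕ × ℕ → ℕ` is a semistandard Young tableau of skew shape `ν / μ`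
with entries at most `k` if it vanishes off the cells of `ν` not in `μ`, takes values
in `{1, …, k}` on those cells, is weakly increasing along each row and strictly
increasing down each column. -/
def IsSkewSSYT (k : ℕ) (μ ν : YoungDiagram) (f : ℕ × ℕ → ℕ) : Prop :=
  (∀ c : ℕ × ℕ, c ∉ ν.cells \ μ.cells → f c = 0) ∧
  (∀ c ∈ ν.cells \ μ.cells, 1 ≤ f c ∧ f c ≤ k) ∧
  (∀ i j1 j2 : ℕ, (i, j1) ∈ ν.cells \ μ.cells → (i, j2) ∈ ν.cells \ μ.cells →
    j1 < j2 → f (i, j1) ≤ f (i, j2)) ∧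
  (∀ i1 i2 j : ℕ, (i1, j) ∈ ν.cells \ μ.cells → (i2, j) ∈ ν.cells \ μ.cells →
    i1 < i2 → f (i1, j) < f (i2, j))

/-- `DimK k μ ν` is the number of semistandard Young tableaux of skew shape `ν / μ`
with entries at most `k`. -/
noncomputable def DimK (k : ℕ) (μ ν : YoungDiagram) : ℕ :=
  Set.ncard {f : ℕ × ℕ → ℕ | IsSkewSSYT k μ ν f}

namespace YDAux


lemma nat_eq_of_lt_iff {a b : ℕ} (h : ∀ j, j < a ↔ j < b) : a = b := by
  rcases lt_trichotomy a b with hl | he | hl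
  · exact absurd ((h a).mpr hl) (lt_irrefl a)
  · exact he
  · exact absurd ((h b).mp hl) (lt_irrefl b)

lemma eq_of_rowLen_eq (μ ν : YoungDiagram) (h : ∀ i, μ.rowLen i = ν.rowLen i) : μ = ν := by
  rw [YoungDiagram.ext_iff, Finset.ext_iff]
  rintro ⟨i, j⟩
  simp only [YoungDiagram.mem_cells, YoungDiagram.mem_iff_lt_rowLen, h i]

lemma le_iff_rowLen {μ ν : YoungDiagram} : μ ≤ ν ↔ ∀ i, μ.rowLen i ≤ ν.rowLen i := by
  constructor
  · intro h i
    by_contra hc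
    push_neg at hc
    have : (i, ν.rowLen i) ∈ μ := YoungDiagram.mem_iff_lt_rowLen.mpr hc
    exact absurd (YoungDiagram.mem_iff_lt_rowLen.mp (h this)) (lt_irrefl _)
  · intro h
    rw [← YoungDiagram.cells_subset_iff]
    intro c hc
    rw [YoungDiagram.mem_cells, YoungDiagram.mem_iff_lt_rowLen] at *
    exact lt_of_lt_of_le hc (h c.1)

lemma rowLen_eq_zero_of_colLen_le {μ : YoungDiagram} {i : ℕ} (h : μ.colLen 0 ≤ i) :
    μ.rowLen i = 0 := by
  by_contra hc
  have : (i, 0) ∈ μ := YoungDiagram.mem_iff_lt_rowLen.mpr (Nat.pos_of_ne_zero hc)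
  rw [YoungDiagram.mem_iff_lt_colLen] at this
  omega

lemma colLen_le_card (μ : YoungDiagram) : μ.colLen 0 ≤ μ.card := by
  rw [YoungDiagram.colLen_eq_card]
  exact Finset.card_le_card (Finset.filter_subset _ _)

lemma card_mono {μ ν : YoungDiagram} (h : μ ≤ ν) : μ.card ≤ ν.card :=
  Finset.card_le_card (YoungDiagram.cells_subset_iff.mpr h)

/-- Build a Young diagram from an antitone sequence vanishing from `N` on. -/
def ofSeq (r : ℕ → ℕ) (hr : Antitone r) (N : ℕ) (hN : ∀ i, N ≤ i → r i = 0) :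
    YoungDiagram where
  cells := (Finset.range N ×ˢ Finset.range (r 0)).filter (fun c => c.2 < r c.1)
  isLowerSet := by
    rintro ⟨i1, j1⟩ ⟨i2, j2⟩ ⟨hi, hj⟩ hmem
    simp only [Finset.coe_filter, Set.mem_setOf_eq, Finset.mem_product,
      Finset.mem_range] at *
    refine ⟨⟨?_, ?_⟩, ?_⟩
    · by_contra hc
      push_neg at hc
      have := hN i2 hc
      omega
    · have := hr (Nat.zero_le i2); omega
    · have := hr hi; omega

lemma mem_ofSeq {r : ℕ → ℕ} {hr : Antitone r} {N : ℕ} {hN : ∀ i, N ≤ i → r i = 0}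
    {c : ℕ × ℕ} : c ∈ ofSeq r hr N hN ↔ c.2 < r c.1 := by
  obtain ⟨i, j⟩ := c
  show (i, j) ∈ Finset.filter _ _ ↔ _
  simp only [Finset.mem_filter, Finset.mem_product, Finset.mem_range]
  constructor
  · rintro ⟨-, h⟩; exact h
  · intro h
    refine ⟨⟨?_, ?_⟩, h⟩
    · by_contra hc
      push_neg at hc
      have := hN i hc
      omega
    · have := hr (Nat.zero_le i); omega

lemma rowLen_ofSeq {r : ℕ → ℕ} {hr : Antitone r} {N : ℕ} {hN : ∀ i, N ≤ i → r i = 0}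
    (i : ℕ) : (ofSeq r hr N hN).rowLen i = r i := by
  apply nat_eq_of_lt_iff
  intro j
  rw [← YoungDiagram.mem_iff_lt_rowLen, mem_ofSeq]

lemma card_eq_sum_rowLen (μ : YoungDiagram) (N : ℕ) (hN : ∀ i, N ≤ i → μ.rowLen i = 0) :
    μ.card = ∑ i ∈ Finset.range N, μ.rowLen i := by
  have h1 : ∀ c ∈ μ.cells, c.1 ∈ Finset.range N := by
    intro c hc
    rw [Finset.mem_range]
    by_contra hge
    push_neg at hge
    rw [YoungDiagram.mem_cells, YoungDiagram.mem_iff_lt_rowLen, hN c.1 hge] at hc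
    omega
  show μ.cells.card = _
  rw [Finset.card_eq_sum_card_fiberwise h1]
  refine Finset.sum_congr rfl fun i _ => ?_
  rw [YoungDiagram.rowLen_eq_card]
  rfl



/-- horizontal strip relation -/
def HStrip (μ ν : YoungDiagram) : Prop :=
  μ ≤ ν ∧ ∀ i, ν.rowLen (i + 1) ≤ μ.rowLen i

lemma isSkewSSYT_bot_iff {k : ℕ} {ν : YoungDiagram} {f : ℕ × ℕ → ℕ} :
    IsSkewSSYT k ⊥ ν f ↔
      (∀ c : ℕ × ℕ, c ∉ ν.cells → f c = 0) ∧
      (∀ c ∈ ν.cells, 1 ≤ f c ∧ f c ≤ k) ∧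
      (∀ i j1 j2 : ℕ, (i, j1) ∈ ν.cells → (i, j2) ∈ ν.cells →
        j1 < j2 → f (i, j1) ≤ f (i, j2)) ∧
      (∀ i1 i2 j : ℕ, (i1, j) ∈ ν.cells → (i2, j) ∈ ν.cells →
        i1 < i2 → f (i1, j) < f (i2, j)) := by
  simp only [IsSkewSSYT, YoungDiagram.cells_bot, Finset.sdiff_empty]

def SY (k : ℕ) (ν : YoungDiagram) : Set (ℕ × ℕ → ℕ) := {f | IsSkewSSYT k ⊥ ν f}

lemma finite_SY (k : ℕ) (ν : YoungDiagram) : (SY k ν).Finite := by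
  have : Finite (↥ν.cells → Fin (k + 1)) := by infer_instance
  apply Set.Finite.of_finite_image (f := fun f (c : ↥ν.cells) => (⟨min (f c) k, by omega⟩ : Fin (k+1)))
  · exact Set.toFinite _
  · intro f hf g hg h
    rw [SY, Set.mem_setOf_eq, isSkewSSYT_bot_iff] at hf hg
    funext c
    by_cases hc : c ∈ ν.cells
    · have h1 := (hf.2.1 c hc).2
      have h2 := (hg.2.1 c hc).2
      have := congrFun h ⟨c, hc⟩
      simp only [Fin.mk.injEq] at this
      omega
    · rw [hf.1 c hc, hg.1 c hc]

lemma SY_zero_bot : SY 0 ⊥ = {fun _ => 0} := by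
  ext f
  simp only [SY, Set.mem_setOf_eq, isSkewSSYT_bot_iff, YoungDiagram.cells_bot,
    Set.mem_singleton_iff]
  constructor
  · rintro ⟨h0, -⟩
    funext c
    exact h0 c (Finset.notMem_empty c)
  · rintro rfl
    refine ⟨fun _ _ => rfl, ?_, ?_, ?_⟩ <;> intros <;> simp_all [Finset.notMem_empty]

lemma SY_bot (k : ℕ) : SY k ⊥ = {fun _ => 0} := by
  ext f
  simp only [SY, Set.mem_setOf_eq, isSkewSSYT_bot_iff, YoungDiagram.cells_bot,
    Set.mem_singleton_iff]
  constructor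
  · rintro ⟨h0, -⟩
    funext c
    exact h0 c (Finset.notMem_empty c)
  · rintro rfl
    refine ⟨fun _ _ => rfl, ?_, ?_, ?_⟩ <;> intros <;> simp_all [Finset.notMem_empty]

lemma SY_zero {ν : YoungDiagram} (hν : ν ≠ ⊥) : SY 0 ν = ∅ := by
  rw [Set.eq_empty_iff_forall_notMem]
  intro f hf
  rw [SY, Set.mem_setOf_eq, isSkewSSYT_bot_iff] at hf
  have hne : ν.cells.Nonempty := by
    rw [Finset.nonempty_iff_ne_empty]
    intro h
    exact hν (by ext c; simp [h])
  obtain ⟨c, hc⟩ := hne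
  have := hf.2.1 c hc
  omega


section Rec

variable (b : ℕ) (ν : YoungDiagram)

lemma cell_le_cell {f : ℕ × ℕ → ℕ} (hf : f ∈ SY k ν) {i1 i2 j1 j2 : ℕ}
    (hi : i2 ≤ i1) (hj : j2 ≤ j1) (h1 : (i1, j1) ∈ ν.cells) :
    f (i2, j2) ≤ f (i1, j1) := by
  rw [SY, Set.mem_setOf_eq, isSkewSSYT_bot_iff] at hf
  have h2 : (i2, j2) ∈ ν.cells := by
    rw [YoungDiagram.mem_cells] at *
    exact ν.up_left_mem hi hj h1
  have h3 : (i2, j1) ∈ ν.cells := by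
    rw [YoungDiagram.mem_cells] at *
    exact ν.up_left_mem hi le_rfl h1
  have s1 : f (i2, j2) ≤ f (i2, j1) := by
    rcases eq_or_lt_of_le hj with rfl | hlt
    · exact le_rfl
    · exact hf.2.2.1 i2 j2 j1 h2 h3 hlt
  have s2 : f (i2, j1) ≤ f (i1, j1) := by
    rcases eq_or_lt_of_le hi with rfl | hlt
    · exact le_rfl
    · exact le_of_lt (hf.2.2.2 i2 i1 j1 h3 h1 hlt)
  omega

/-- the subdiagram of cells with entries `≤ b` -/
def lamOf (f : ℕ × ℕ → ℕ) (hf : f ∈ SY (b + 1) ν) : YoungDiagram where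
  cells := ν.cells.filter (fun c => f c ≤ b)
  isLowerSet := by
    rintro ⟨i1, j1⟩ ⟨i2, j2⟩ ⟨hi, hj⟩ hmem
    simp only [Finset.coe_filter, Set.mem_setOf_eq] at *
    obtain ⟨h1, hfb⟩ := hmem
    refine ⟨?_, le_trans (cell_le_cell ν hf hi hj h1) hfb⟩
    rw [YoungDiagram.mem_cells] at *
    exact ν.up_left_mem hi hj h1

lemma mem_lamOf {f : ℕ × ℕ → ℕ} {hf : f ∈ SY (b + 1) ν} {c : ℕ × ℕ} :
    c ∈ (lamOf b ν f hf).cells ↔ c ∈ ν.cells ∧ f c ≤ b := by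
  simp [lamOf]

lemma hstrip_lamOf (f : ℕ × ℕ → ℕ) (hf : f ∈ SY (b + 1) ν) :
    HStrip (lamOf b ν f hf) ν := by
  constructor
  · rw [← YoungDiagram.cells_subset_iff]
    intro c hc
    exact (mem_lamOf b ν |>.mp hc).1
  · intro i
    by_contra hc
    push_neg at hc
    set l := lamOf b ν f hf with hl
    set j := l.rowLen i with hj
    have hnotl : (i, j) ∉ l.cells := by
      rw [YoungDiagram.mem_cells, YoungDiagram.mem_iff_lt_rowLen]
      omega
    have hν1 : (i + 1, j) ∈ ν.cells := by
      rw [YoungDiagram.mem_cells, YoungDiagram.mem_iff_lt_rowLen]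
      omega
    have hν0 : (i, j) ∈ ν.cells := by
      rw [YoungDiagram.mem_cells, YoungDiagram.mem_iff_lt_rowLen]
      have := ν.rowLen_anti i (i + 1) (Nat.le_succ i)
      omega
    have hfgt : b < f (i, j) := by
      by_contra hle
      push_neg at hle
      exact hnotl ((mem_lamOf b ν).mpr ⟨hν0, hle⟩)
    rw [SY, Set.mem_setOf_eq, isSkewSSYT_bot_iff] at hf
    have hcol := hf.2.2.2 i (i + 1) j hν0 hν1 (Nat.lt_succ_self i)
    have h1 := (hf.2.1 (i, j) hν0).2
    have h2 := (hf.2.1 (i + 1, j) hν1).2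
    omega

/-- restriction of the tableau to entries `≤ b` -/
def gOf (f : ℕ × ℕ → ℕ) : ℕ × ℕ → ℕ := fun c => if f c ≤ b then f c else 0

lemma gOf_mem (f : ℕ × ℕ → ℕ) (hf : f ∈ SY (b + 1) ν) :
    gOf b f ∈ SY b (lamOf b ν f hf) := by
  have hf' := hf
  rw [SY, Set.mem_setOf_eq, isSkewSSYT_bot_iff] at hf'
  rw [SY, Set.mem_setOf_eq, isSkewSSYT_bot_iff]
  refine ⟨?_, ?_, ?_, ?_⟩
  · intro c hc
    rw [mem_lamOf] at hc
    push_neg at hc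
    by_cases hcv : c ∈ ν.cells
    · have := hc hcv
      simp only [gOf]
      rw [if_neg (by omega)]
    · simp only [gOf, hf'.1 c hcv]
      simp
  · intro c hc
    rw [mem_lamOf] at hc
    have := hf'.2.1 c hc.1
    simp only [gOf, if_pos hc.2]
    omega
  · intro i j1 j2 h1 h2 hlt
    rw [mem_lamOf] at h1 h2
    simp only [gOf, if_pos h1.2, if_pos h2.2]
    exact hf'.2.2.1 i j1 j2 h1.1 h2.1 hlt
  · intro i1 i2 j h1 h2 hlt
    rw [mem_lamOf] at h1 h2
    simp only [gOf, if_pos h1.2, if_pos h2.2]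
    exact hf'.2.2.2 i1 i2 j h1.1 h2.1 hlt

/-- extension of a tableau on `l` by entries `b+1` on `ν \ l` -/
def upOf (l : YoungDiagram) (g : ℕ × ℕ → ℕ) : ℕ × ℕ → ℕ :=
  fun c => if c ∈ ν.cells ∧ c ∉ l.cells then b + 1 else g c

lemma upOf_mem {l : YoungDiagram} (hl : HStrip l ν) {g : ℕ × ℕ → ℕ}
    (hg : g ∈ SY b l) : upOf b ν l g ∈ SY (b + 1) ν := by
  have hsub : l.cells ⊆ ν.cells := YoungDiagram.cells_subset_iff.mpr hl.1
  rw [SY, Set.mem_setOf_eq, isSkewSSYT_bot_iff] at hg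
  rw [SY, Set.mem_setOf_eq, isSkewSSYT_bot_iff]
  have hin : ∀ c : ℕ × ℕ, c ∈ l.cells → ¬(c ∈ ν.cells ∧ c ∉ l.cells) :=
    fun c hc h => h.2 hc
  have hout : ∀ c : ℕ × ℕ, c ∉ ν.cells → ¬(c ∈ ν.cells ∧ c ∉ l.cells) :=
    fun c hc h => hc h.1
  refine ⟨?_, ?_, ?_, ?_⟩
  · intro c hc
    have hcl : c ∉ l.cells := fun h => hc (hsub h)
    simp only [upOf]
    rw [if_neg (hout c hc), hg.1 c hcl]
  · intro c hc
    by_cases hcl : c ∈ l.cells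
    · have := hg.2.1 c hcl
      simp only [upOf]
      rw [if_neg (hin c hcl)]
      omega
    · have hcond : c ∈ ν.cells ∧ c ∉ l.cells := ⟨hc, hcl⟩
      simp only [upOf]
      rw [if_pos hcond]
      omega
  · intro i j1 j2 h1 h2 hlt
    by_cases hc2 : (i, j2) ∈ l.cells
    · have hc1 : (i, j1) ∈ l.cells := by
        rw [YoungDiagram.mem_cells] at *
        exact l.up_left_mem le_rfl (le_of_lt hlt) hc2
      simp only [upOf]
      rw [if_neg (hin _ hc1), if_neg (hin _ hc2)]
      exact hg.2.2.1 i j1 j2 hc1 hc2 hlt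
    · have hcond2 : (i, j2) ∈ ν.cells ∧ (i, j2) ∉ l.cells := ⟨h2, hc2⟩
      by_cases hc1 : (i, j1) ∈ l.cells
      · have := (hg.2.1 _ hc1).2
        simp only [upOf]
        rw [if_neg (hin _ hc1), if_pos hcond2]
        omega
      · have hcond1 : (i, j1) ∈ ν.cells ∧ (i, j1) ∉ l.cells := ⟨h1, hc1⟩
        simp only [upOf]
        rw [if_pos hcond1, if_pos hcond2]
  · intro i1 i2 j h1 h2 hlt
    by_cases hc1 : (i1, j) ∈ l.cells
    · by_cases hc2 : (i2, j) ∈ l.cells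
      · simp only [upOf]
        rw [if_neg (hin _ hc1), if_neg (hin _ hc2)]
        exact hg.2.2.2 i1 i2 j hc1 hc2 hlt
      · have hcond2 : (i2, j) ∈ ν.cells ∧ (i2, j) ∉ l.cells := ⟨h2, hc2⟩
        have := (hg.2.1 _ hc1).2
        simp only [upOf]
        rw [if_neg (hin _ hc1), if_pos hcond2]
        omega
    · exfalso
      apply hc1
      rw [YoungDiagram.mem_cells, YoungDiagram.mem_iff_lt_rowLen]
      rw [YoungDiagram.mem_cells, YoungDiagram.mem_iff_lt_rowLen] at h2
      calc j < ν.rowLen i2 := h2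
        _ ≤ ν.rowLen (i1 + 1) := ν.rowLen_anti _ _ hlt
        _ ≤ l.rowLen i1 := hl.2 i1

lemma lamOf_upOf {l : YoungDiagram} (hl : HStrip l ν) {g : ℕ × ℕ → ℕ}
    (hg : g ∈ SY b l) (hmem : upOf b ν l g ∈ SY (b + 1) ν) :
    lamOf b ν (upOf b ν l g) hmem = l := by
  have hsub : l.cells ⊆ ν.cells := YoungDiagram.cells_subset_iff.mpr hl.1
  rw [SY, Set.mem_setOf_eq, isSkewSSYT_bot_iff] at hg
  ext c
  rw [YoungDiagram.mem_cells, YoungDiagram.mem_cells, ← YoungDiagram.mem_cells,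
    ← YoungDiagram.mem_cells (μ := l), mem_lamOf]
  constructor
  · rintro ⟨hcv, hle⟩
    by_contra hcl
    have hcond : c ∈ ν.cells ∧ c ∉ l.cells := ⟨hcv, hcl⟩
    simp only [upOf] at hle
    rw [if_pos hcond] at hle
    omega
  · intro hcl
    have := hg.2.1 c hcl
    have hcond : ¬(c ∈ ν.cells ∧ c ∉ l.cells) := fun h => h.2 hcl
    refine ⟨hsub hcl, ?_⟩
    simp only [upOf]
    rw [if_neg hcond]
    omega

lemma gOf_upOf {l : YoungDiagram} (hl : HStrip l ν) {g : ℕ × ℕ → ℕ}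
    (hg : g ∈ SY b l) : gOf b (upOf b ν l g) = g := by
  have hsub : l.cells ⊆ ν.cells := YoungDiagram.cells_subset_iff.mpr hl.1
  rw [SY, Set.mem_setOf_eq, isSkewSSYT_bot_iff] at hg
  funext c
  by_cases hcl : c ∈ l.cells
  · have := hg.2.1 c hcl
    have hcond : ¬(c ∈ ν.cells ∧ c ∉ l.cells) := fun h => h.2 hcl
    simp only [gOf, upOf]
    simp only [if_neg hcond]
    rw [if_pos (by omega)]
  · by_cases hcv : c ∈ ν.cells
    · have hcond : c ∈ ν.cells ∧ c ∉ l.cells := ⟨hcv, hcl⟩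
      simp only [gOf, upOf]
      simp only [if_pos hcond]
      rw [if_neg (by omega), hg.1 c hcl]
    · have hgc := hg.1 c hcl
      have hcond : ¬(c ∈ ν.cells ∧ c ∉ l.cells) := fun h => hcv h.1
      simp only [gOf, upOf]
      simp only [if_neg hcond]
      rw [if_pos (by omega)]

lemma upOf_lamOf (f : ℕ × ℕ → ℕ) (hf : f ∈ SY (b + 1) ν) :
    upOf b ν (lamOf b ν f hf) (gOf b f) = f := by
  have hf' := hf
  rw [SY, Set.mem_setOf_eq, isSkewSSYT_bot_iff] at hf'
  funext c
  by_cases hcv : c ∈ ν.cells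
  · by_cases hcl : c ∈ (lamOf b ν f hf).cells
    · rw [mem_lamOf] at hcl
      have hcond : ¬(c ∈ ν.cells ∧ c ∉ (lamOf b ν f hf).cells) := by
        rw [mem_lamOf]; tauto
      simp only [upOf, gOf]
      rw [if_neg hcond, if_pos hcl.2]
    · have hgt : b < f c := by
        by_contra hle
        push_neg at hle
        exact hcl ((mem_lamOf b ν).mpr ⟨hcv, hle⟩)
      have := (hf'.2.1 c hcv).2
      have hcond : c ∈ ν.cells ∧ c ∉ (lamOf b ν f hf).cells := ⟨hcv, hcl⟩
      simp only [upOf]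
      rw [if_pos hcond]
      omega
  · have h0 := hf'.1 c hcv
    have hcond : ¬(c ∈ ν.cells ∧ c ∉ (lamOf b ν f hf).cells) := fun h => hcv h.1
    simp only [upOf, gOf]
    rw [if_neg hcond, if_pos (by omega), h0]

lemma sigma_subtype_ext {ι κ : Type*} {p : ι → Prop} {S : ι → Set κ}
    (x y : Σ l : {l : ι // p l}, ↥(S l.1)) (h1 : x.1.1 = y.1.1)
    (h2 : (x.2 : κ) = y.2) : x = y := by
  obtain ⟨⟨a, ha⟩, f, hf⟩ := x
  obtain ⟨⟨b, hb⟩, g, hg⟩ := y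
  dsimp only at h1 h2
  subst h1
  subst h2
  rfl

/-- The recursion equivalence. -/
noncomputable def recEquiv :
    ↥(SY (b + 1) ν) ≃ Σ l : {l : YoungDiagram // HStrip l ν}, ↥(SY b l.1) where
  toFun := fun ⟨f, hf⟩ =>
    ⟨⟨lamOf b ν f hf, hstrip_lamOf b ν f hf⟩, ⟨gOf b f, gOf_mem b ν f hf⟩⟩
  invFun := fun ⟨⟨l, hl⟩, ⟨g, hg⟩⟩ => ⟨upOf b ν l g, upOf_mem b ν hl hg⟩
  left_inv := by
    rintro ⟨f, hf⟩
    simp only [Subtype.mk.injEq]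
    exact upOf_lamOf b ν f hf
  right_inv := by
    rintro ⟨⟨l, hl⟩, g, hg⟩
    exact sigma_subtype_ext _ _ (lamOf_upOf b ν hl hg (upOf_mem b ν hl hg))
      (gOf_upOf b ν hl hg)

end Rec

lemma tsum_one_SY (k : ℕ) (ν : YoungDiagram) :
    ∑' (_ : ↥(SY k ν)), (1 : ℝ≥0∞) = (DimK k ⊥ ν : ℝ≥0∞) := by
  have h := finite_SY k ν
  rw [ENNReal.tsum_set_one, h.encard_eq_coe_toFinset_card]
  rw [show DimK k ⊥ ν = (SY k ν).ncard from rfl, Set.ncard_eq_toFinset_card _ h]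
  simp

open Classical in
noncomputable def hsE (μ ν : YoungDiagram) : ℝ≥0∞ := if HStrip μ ν then 1 else 0

lemma tsum_ite_eq_subtype (p : YoungDiagram → Prop) [DecidablePred p]
    (w : YoungDiagram → ℝ≥0∞) :
    ∑' ν, (if p ν then w ν else 0) = ∑' (x : ↥{ν | p ν}), w x.1 := by
  rw [tsum_subtype]
  apply tsum_congr
  intro x
  by_cases h : p x
  · rw [if_pos h, Set.indicator_of_mem (show x ∈ {ν | p ν} from h)]
  · rw [if_neg h, Set.indicator_of_notMem (show x ∉ {ν | p ν} from h)]

open Classical in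
lemma DimK_succ (b : ℕ) (ν : YoungDiagram) :
    (DimK (b + 1) ⊥ ν : ℝ≥0∞) = ∑' l, hsE l ν * (DimK b ⊥ l : ℝ≥0∞) := by
  rw [← tsum_one_SY]
  rw [← Equiv.tsum_eq (recEquiv b ν).symm (fun _ => (1 : ℝ≥0∞))]
  rw [ENNReal.tsum_sigma (fun (x : {l : YoungDiagram // HStrip l ν}) (_ : ↥(SY b x.1)) => (1 : ℝ≥0∞))]
  have h1 : ∀ (x : {l : YoungDiagram // HStrip l ν}),
      ∑' (_ : ↥(SY b x.1)), (1 : ℝ≥0∞) = (DimK b ⊥ x.1 : ℝ≥0∞) :=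
    fun x => tsum_one_SY b x.1
  calc ∑' (x : {l : YoungDiagram // HStrip l ν}), ∑' (_ : ↥(SY b x.1)), (1 : ℝ≥0∞)
      = ∑' (x : {l : YoungDiagram // HStrip l ν}), (DimK b ⊥ x.1 : ℝ≥0∞) := by
        exact tsum_congr h1
    _ = ∑' (x : ↥{l : YoungDiagram | HStrip l ν}), (DimK b ⊥ x.1 : ℝ≥0∞) := rfl
    _ = ∑' l, (if HStrip l ν then (DimK b ⊥ l : ℝ≥0∞) else 0) := by
        rw [tsum_ite_eq_subtype (fun l => HStrip l ν) (fun l => (DimK b ⊥ l : ℝ≥0∞))]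
    _ = ∑' l, hsE l ν * (DimK b ⊥ l : ℝ≥0∞) := by
        apply tsum_congr
        intro l
        simp only [hsE, ite_mul, one_mul, zero_mul]

open Classical in
lemma DimK_zero (ν : YoungDiagram) :
    DimK 0 ⊥ ν = if ν = ⊥ then 1 else 0 := by
  by_cases h : ν = ⊥
  · subst h
    rw [if_pos rfl, show DimK 0 ⊥ ⊥ = (SY 0 ⊥).ncard from rfl, SY_zero_bot]
    exact Set.ncard_singleton _
  · rw [if_neg h, show DimK 0 ⊥ ν = (SY 0 ν).ncard from rfl, SY_zero h]
    exact Set.ncard_empty _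

lemma DimK_bot (k : ℕ) : DimK k ⊥ ⊥ = 1 := by
  rw [show DimK k ⊥ ⊥ = (SY k ⊥).ncard from rfl, SY_bot]
  exact Set.ncard_singleton _


section Key

variable (μ l : YoungDiagram)

def Mx (i : ℕ) : ℕ := max (μ.rowLen i) (l.rowLen i)

def mn (i : ℕ) : ℕ := min (μ.rowLen i) (l.rowLen i)

lemma P_iff {ν : YoungDiagram} : (HStrip μ ν ∧ HStrip l ν) ↔
    (∀ i, Mx μ l i ≤ ν.rowLen i) ∧ (∀ i, ν.rowLen (i + 1) ≤ mn μ l i) := by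
  simp only [HStrip, le_iff_rowLen, Mx, mn, max_le_iff, le_min_iff]
  constructor
  · rintro ⟨⟨h1, h2⟩, h3, h4⟩
    exact ⟨fun i => ⟨h1 i, h3 i⟩, fun i => ⟨h2 i, h4 i⟩⟩
  · rintro ⟨h1, h2⟩
    exact ⟨⟨fun i => (h1 i).1, fun i => (h2 i).1⟩, fun i => (h1 i).2, fun i => (h2 i).2⟩

lemma Q_iff {τ : YoungDiagram} : (HStrip τ μ ∧ HStrip τ l) ↔
    (∀ i, τ.rowLen i ≤ mn μ l i) ∧ (∀ i, Mx μ l (i + 1) ≤ τ.rowLen i) := by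
  simp only [HStrip, le_iff_rowLen, Mx, mn, max_le_iff, le_min_iff]
  constructor
  · rintro ⟨⟨h1, h2⟩, h3, h4⟩
    exact ⟨fun i => ⟨h1 i, h3 i⟩, fun i => ⟨h2 i, h4 i⟩⟩
  · rintro ⟨h1, h2⟩
    exact ⟨⟨fun i => (h1 i).1, fun i => (h2 i).1⟩, fun i => (h1 i).2, fun i => (h2 i).2⟩

lemma mn_le_mu (i : ℕ) : mn μ l i ≤ μ.rowLen i := min_le_left _ _

lemma mn_le_Mx (i : ℕ) : mn μ l i ≤ Mx μ l i := min_le_max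

lemma mn_vanish {i : ℕ} (hi : μ.colLen 0 ≤ i) : mn μ l i = 0 := by
  have := mn_le_mu μ l i
  have := rowLen_eq_zero_of_colLen_le (μ := μ) hi
  omega

section Maps

variable {μ l}

/-- the sequence of row lengths of the `τ` associated to `ν`. -/
def tauSeq (ν : YoungDiagram) (i : ℕ) : ℕ :=
  mn μ l i + Mx μ l (i + 1) - ν.rowLen (i + 1)

variable (ν : YoungDiagram) (h1 : ∀ i, Mx μ l i ≤ ν.rowLen i)
  (h2 : ∀ i, ν.rowLen (i + 1) ≤ mn μ l i)

/-- the `τ` associated to `ν`. -/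
def tauOf : YoungDiagram :=
  ofSeq (tauSeq (μ := μ) (l := l) ν)
    (antitone_nat_of_succ_le (fun i => by
      have a1 := h1 (i + 1 + 1)
      have a2 := h2 i
      have a3 := mn_le_Mx μ l (i + 1)
      simp only [tauSeq]
      omega))
    (μ.colLen 0)
    (fun i hi => by
      have a1 := h1 (i + 1)
      have a2 := mn_vanish μ l hi
      simp only [tauSeq]
      omega)

lemma rowLen_tauOf (i : ℕ) : (tauOf ν h1 h2).rowLen i = tauSeq (μ := μ) (l := l) ν i :=
  rowLen_ofSeq i

lemma tauOf_Q1 (i : ℕ) : (tauOf ν h1 h2).rowLen i ≤ mn μ l i := by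
  rw [rowLen_tauOf]
  have := h1 (i + 1)
  simp only [tauSeq]
  omega

lemma tauOf_Q2 (i : ℕ) : Mx μ l (i + 1) ≤ (tauOf ν h1 h2).rowLen i := by
  rw [rowLen_tauOf]
  have := h2 i
  simp only [tauSeq]
  omega

/-- the inverse sequence. -/
def nuSeq (n : ℕ) (τ : YoungDiagram) : ℕ → ℕ
  | 0 => Mx μ l 0 + n
  | (i + 1) => mn μ l i + Mx μ l (i + 1) - τ.rowLen i

variable (n : ℕ) (τ : YoungDiagram) (g1 : ∀ i, τ.rowLen i ≤ mn μ l i)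
  (g2 : ∀ i, Mx μ l (i + 1) ≤ τ.rowLen i)

/-- the `ν` associated to `(n, τ)`. -/
def nuOf : YoungDiagram :=
  ofSeq (nuSeq (μ := μ) (l := l) n τ)
    (antitone_nat_of_succ_le (fun i => by
      match i with
      | 0 =>
        have a1 := g2 0
        have a3 := mn_le_Mx μ l 0
        simp only [nuSeq]
        omega
      | (j + 1) =>
        have a1 := g2 (j + 1)
        have a2 := g1 j
        have a3 := mn_le_Mx μ l (j + 1)
        simp only [nuSeq]
        omega))
    (μ.colLen 0 + 1)
    (fun i hi => by
      match i, hi with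
      | (j + 1), hi =>
        have a1 := g2 j
        have a2 := mn_vanish (l := l) (μ := μ) (i := j) (by omega)
        simp only [nuSeq]
        omega)

lemma rowLen_nuOf (i : ℕ) : (nuOf n τ g1 g2).rowLen i = nuSeq (μ := μ) (l := l) n τ i :=
  rowLen_ofSeq i

lemma nuOf_P1 (i : ℕ) : Mx μ l i ≤ (nuOf n τ g1 g2).rowLen i := by
  rw [rowLen_nuOf]
  match i with
  | 0 => simp [nuSeq]
  | (j + 1) =>
    have := g1 j
    simp only [nuSeq]
    omega

lemma nuOf_P2 (i : ℕ) : (nuOf n τ g1 g2).rowLen (i + 1) ≤ mn μ l i := by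
  rw [rowLen_nuOf]
  have := g2 i
  simp only [nuSeq]
  omega

end Maps

section Cards

variable {μ l : YoungDiagram} (ν : YoungDiagram)
  (h1 : ∀ i, Mx μ l i ≤ ν.rowLen i) (h2 : ∀ i, ν.rowLen (i + 1) ≤ mn μ l i)

lemma tauOf_le_l : tauOf ν h1 h2 ≤ l :=
  le_iff_rowLen.mpr fun i => le_trans (tauOf_Q1 ν h1 h2 i) (min_le_right _ _)

lemma mu_le_nu_of_P {μ' l' ν' : YoungDiagram} (hm : ∀ i, Mx μ' l' i ≤ ν'.rowLen i) :
    μ' ≤ ν' :=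
  le_iff_rowLen.mpr fun i => le_trans (le_max_left _ _) (hm i)

lemma nu_tau_card :
    ν.card + (tauOf ν h1 h2).card = (ν.rowLen 0 - Mx μ l 0) + (μ.card + l.card) := by
  set K := μ.colLen 0 + l.colLen 0 + ν.colLen 0 with hK
  have hμv : ∀ i, K ≤ i → μ.rowLen i = 0 :=
    fun i hi => rowLen_eq_zero_of_colLen_le (by omega)
  have hlv : ∀ i, K ≤ i → l.rowLen i = 0 :=
    fun i hi => rowLen_eq_zero_of_colLen_le (by omega)
  have hνv : ∀ i, K ≤ i → ν.rowLen i = 0 :=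
    fun i hi => rowLen_eq_zero_of_colLen_le (by omega)
  have hτv : ∀ i, K ≤ i → (tauOf ν h1 h2).rowLen i = 0 := by
    intro i hi
    have a1 := tauOf_Q1 ν h1 h2 i
    have a2 := mn_le_mu μ l i
    have a3 := hμv i hi
    omega
  rw [card_eq_sum_rowLen ν (K + 1) (fun i hi => hνv i (by omega)),
      card_eq_sum_rowLen (tauOf ν h1 h2) (K + 1) (fun i hi => hτv i (by omega)),
      card_eq_sum_rowLen μ (K + 1) (fun i hi => hμv i (by omega)),
      card_eq_sum_rowLen l (K + 1) (fun i hi => hlv i (by omega))]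
  have e1 : ∑ i ∈ Finset.range (K + 1), ν.rowLen i
      = (∑ i ∈ Finset.range K, ν.rowLen (i + 1)) + ν.rowLen 0 :=
    Finset.sum_range_succ' _ _
  have e2 : ∑ i ∈ Finset.range (K + 1), (tauOf ν h1 h2).rowLen i
      = (∑ i ∈ Finset.range K, (tauOf ν h1 h2).rowLen i) + (tauOf ν h1 h2).rowLen K :=
    Finset.sum_range_succ _ _
  have e2' : (tauOf ν h1 h2).rowLen K = 0 := hτv K le_rfl
  have e6 : (∑ i ∈ Finset.range (K + 1), μ.rowLen i)
      + (∑ i ∈ Finset.range (K + 1), l.rowLen i)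
      = ((∑ i ∈ Finset.range K, Mx μ l (i + 1)) + Mx μ l 0)
        + ((∑ i ∈ Finset.range K, mn μ l i) + mn μ l K) := by
    rw [← Finset.sum_add_distrib]
    have e3 : ∑ i ∈ Finset.range (K + 1), (μ.rowLen i + l.rowLen i)
        = ∑ i ∈ Finset.range (K + 1), (Mx μ l i + mn μ l i) := by
      refine Finset.sum_congr rfl fun i _ => ?_
      simp only [Mx, mn]
      exact (max_add_min _ _).symm
    rw [e3, Finset.sum_add_distrib, Finset.sum_range_succ' (fun i => Mx μ l i) K,
      Finset.sum_range_succ (fun i => mn μ l i) K]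
  have e5' : mn μ l K = 0 := mn_vanish μ l (by omega)
  have e7 : (∑ i ∈ Finset.range K, ν.rowLen (i + 1))
      + (∑ i ∈ Finset.range K, (tauOf ν h1 h2).rowLen i)
      = (∑ i ∈ Finset.range K, mn μ l i) + (∑ i ∈ Finset.range K, Mx μ l (i + 1)) := by
    rw [← Finset.sum_add_distrib, ← Finset.sum_add_distrib]
    refine Finset.sum_congr rfl fun i _ => ?_
    rw [rowLen_tauOf]
    have a1 := h1 (i + 1)
    have a2 := h2 i
    simp only [tauSeq]
    omega
  have h0 := h1 0
  omega

lemma exp_id :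
    ν.card - μ.card = (ν.rowLen 0 - Mx μ l 0) + (l.card - (tauOf ν h1 h2).card) := by
  have hc := nu_tau_card ν h1 h2
  have hμν : μ.card ≤ ν.card := card_mono (mu_le_nu_of_P h1)
  have hτl : (tauOf ν h1 h2).card ≤ l.card := card_mono (tauOf_le_l ν h1 h2)
  omega

end Cards

/-- The key bijection. -/
noncomputable def keyEquiv :
    ↥{ν : YoungDiagram | HStrip μ ν ∧ HStrip l ν}
      ≃ ℕ × ↥{τ : YoungDiagram | HStrip τ μ ∧ HStrip τ l} where
  toFun := fun x =>
    (x.1.rowLen 0 - Mx μ l 0,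
     ⟨tauOf x.1 ((P_iff μ l).mp x.2).1 ((P_iff μ l).mp x.2).2,
      (Q_iff μ l).mpr ⟨tauOf_Q1 _ _ _, tauOf_Q2 _ _ _⟩⟩)
  invFun := fun y =>
    ⟨nuOf y.1 y.2.1 ((Q_iff μ l).mp y.2.2).1 ((Q_iff μ l).mp y.2.2).2,
     (P_iff μ l).mpr ⟨nuOf_P1 _ _ _ _, nuOf_P2 _ _ _ _⟩⟩
  left_inv := by
    rintro ⟨ν, hν⟩
    obtain ⟨p1, p2⟩ := (P_iff μ l).mp hν
    apply Subtype.ext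
    apply eq_of_rowLen_eq
    intro i
    dsimp only
    rw [rowLen_nuOf]
    match i with
    | 0 =>
      have := p1 0
      simp only [nuSeq]
      omega
    | (j + 1) =>
      simp only [nuSeq]
      rw [rowLen_tauOf]
      have a1 := p1 (j + 1)
      have a2 := p2 j
      simp only [tauSeq]
      omega
  right_inv := by
    rintro ⟨n, τ, hτ⟩
    obtain ⟨q1, q2⟩ := (Q_iff μ l).mp hτ
    refine Prod.ext ?_ ?_
    · dsimp only
      rw [rowLen_nuOf]
      simp only [nuSeq]
      omega
    · apply Subtype.ext
      apply eq_of_rowLen_eq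
      intro i
      dsimp only
      rw [rowLen_tauOf]
      simp only [tauSeq]
      rw [rowLen_nuOf]
      simp only [nuSeq]
      have a1 := q1 i
      omega

open Classical in
lemma key_tsum (r : ℝ≥0∞) :
    (∑' ν : YoungDiagram,
        if HStrip μ ν ∧ HStrip l ν then r ^ (ν.card - μ.card) else 0)
      = (∑' n : ℕ, r ^ n) *
        ∑' τ : YoungDiagram,
          if HStrip τ μ ∧ HStrip τ l then r ^ (l.card - τ.card) else 0 := by
  refine Eq.trans (tsum_ite_eq_subtype (fun ν => HStrip μ ν ∧ HStrip l ν)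
      (fun ν => r ^ (ν.card - μ.card)))
    (Eq.trans ?_ (congrArg _ (tsum_ite_eq_subtype (fun τ => HStrip τ μ ∧ HStrip τ l)
      (fun τ => r ^ (l.card - τ.card))).symm))
  calc ∑' (x : ↥{ν : YoungDiagram | HStrip μ ν ∧ HStrip l ν}), r ^ (x.1.card - μ.card)
      = ∑' (x : ↥{ν : YoungDiagram | HStrip μ ν ∧ HStrip l ν}),
          (fun y : ℕ × ↥{τ : YoungDiagram | HStrip τ μ ∧ HStrip τ l} =>
            r ^ y.1 * r ^ (l.card - y.2.1.card)) ((keyEquiv μ l) x) := by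
        apply tsum_congr
        intro x
        simp only [keyEquiv, Equiv.coe_fn_mk]
        rw [← pow_add, ← exp_id x.1 ((P_iff μ l).mp x.2).1 ((P_iff μ l).mp x.2).2]
    _ = ∑' (y : ℕ × ↥{τ : YoungDiagram | HStrip τ μ ∧ HStrip τ l}),
          r ^ y.1 * r ^ (l.card - y.2.1.card) :=
        Equiv.tsum_eq (keyEquiv μ l)
          (fun y : ℕ × ↥{τ : YoungDiagram | HStrip τ μ ∧ HStrip τ l} =>
            r ^ y.1 * r ^ (l.card - y.2.1.card))
    _ = ∑' (n : ℕ), ∑' (τ : ↥{τ : YoungDiagram | HStrip τ μ ∧ HStrip τ l}),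
          r ^ n * r ^ (l.card - τ.1.card) :=
        ENNReal.tsum_prod (f := fun (n : ℕ)
          (τ : ↥{τ : YoungDiagram | HStrip τ μ ∧ HStrip τ l}) =>
            r ^ n * r ^ (l.card - τ.1.card))
    _ = ∑' (n : ℕ), r ^ n * ∑' (τ : ↥{τ : YoungDiagram | HStrip τ μ ∧ HStrip τ l}),
          r ^ (l.card - τ.1.card) := by
        apply tsum_congr
        intro n
        exact ENNReal.tsum_mul_left
    _ = (∑' n : ℕ, r ^ n) * ∑' (τ : ↥{τ : YoungDiagram | HStrip τ μ ∧ HStrip τ l}),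
          r ^ (l.card - τ.1.card) := ENNReal.tsum_mul_right

end Key
lemma rowLen_bot (i : ℕ) : (⊥ : YoungDiagram).rowLen i = 0 := by
  by_contra h
  exact YoungDiagram.notMem_bot (i, 0)
    (YoungDiagram.mem_iff_lt_rowLen.mpr (Nat.pos_of_ne_zero h))

lemma HStrip_bot_iff {μ : YoungDiagram} : HStrip μ ⊥ ↔ μ = ⊥ := by
  constructor
  · intro h
    exact le_bot_iff.mp h.1
  · rintro rfl
    exact ⟨le_rfl, fun i => by rw [rowLen_bot]; exact Nat.zero_le _⟩

lemma card_bot : (⊥ : YoungDiagram).card = 0 := by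
  simp [YoungDiagram.card, YoungDiagram.cells_bot]

lemma tsum_mul_three (f : YoungDiagram → ℝ≥0∞) (a c : ℝ≥0∞) :
    a * (∑' t, f t) * c = ∑' t, a * f t * c := by
  rw [← ENNReal.tsum_mul_left, ← ENNReal.tsum_mul_right]

open Classical in
lemma L2 (r : ℝ≥0∞) : ∀ (b : ℕ) (μ : YoungDiagram),
    ∑' ν, hsE μ ν * (DimK b ⊥ ν : ℝ≥0∞) * r ^ (ν.card - μ.card)
      = (∑' n : ℕ, r ^ n) ^ b * (DimK b ⊥ μ : ℝ≥0∞) := by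
  intro b
  induction b with
  | zero =>
    intro μ
    rw [tsum_eq_single ⊥ (fun ν hν => by
      rw [DimK_zero, if_neg hν]
      simp)]
    rw [DimK_zero, if_pos rfl, DimK_zero, card_bot]
    have : (0 : ℕ) - μ.card = 0 := Nat.zero_sub _
    rw [this, pow_zero, pow_zero, one_mul]
    by_cases h : μ = ⊥
    · rw [if_pos h, hsE, if_pos (HStrip_bot_iff.mpr h)]
      simp
    · rw [if_neg h, hsE, if_neg (fun hh => h (HStrip_bot_iff.mp hh))]
      simp
  | succ b ih =>
    intro μ
    set G := ∑' n : ℕ, r ^ n with hG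
    calc ∑' ν, hsE μ ν * (DimK (b + 1) ⊥ ν : ℝ≥0∞) * r ^ (ν.card - μ.card)
        = ∑' ν, ∑' t, hsE μ ν * hsE t ν * (DimK b ⊥ t : ℝ≥0∞)
            * r ^ (ν.card - μ.card) := by
          apply tsum_congr
          intro ν
          rw [DimK_succ, tsum_mul_three]
          exact tsum_congr fun t => by ring
      _ = ∑' t, ∑' ν, hsE μ ν * hsE t ν * (DimK b ⊥ t : ℝ≥0∞)
            * r ^ (ν.card - μ.card) := ENNReal.tsum_comm
      _ = ∑' t, (DimK b ⊥ t : ℝ≥0∞) *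
            ∑' ν, (if HStrip μ ν ∧ HStrip t ν then r ^ (ν.card - μ.card) else 0) := by
          apply tsum_congr
          intro t
          rw [← ENNReal.tsum_mul_left]
          apply tsum_congr
          intro ν
          by_cases h1 : HStrip μ ν <;> by_cases h2 : HStrip t ν <;>
            simp [hsE, h1, h2] <;> ring
      _ = ∑' t, (DimK b ⊥ t : ℝ≥0∞) *
            (G * ∑' τ, (if HStrip τ μ ∧ HStrip τ t
              then r ^ (t.card - τ.card) else 0)) := by
          apply tsum_congr
          intro t
          rw [key_tsum μ t r]
      _ = G * ∑' t, ∑' τ, hsE τ μ *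
            (hsE τ t * (DimK b ⊥ t : ℝ≥0∞) * r ^ (t.card - τ.card)) := by
          conv_rhs => rw [← ENNReal.tsum_mul_left]
          apply tsum_congr
          intro t
          have e : ∑' τ, hsE τ μ * (hsE τ t * (DimK b ⊥ t : ℝ≥0∞)
                * r ^ (t.card - τ.card))
              = (DimK b ⊥ t : ℝ≥0∞) * ∑' τ, (if HStrip τ μ ∧ HStrip τ t
                then r ^ (t.card - τ.card) else 0) := by
            rw [← ENNReal.tsum_mul_left]
            apply tsum_congr
            intro τ
            by_cases h1 : HStrip τ μ <;> by_cases h2 : HStrip τ t <;>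
              simp [hsE, h1, h2] <;> ring
          rw [e]
          ring
      _ = G * ∑' τ, ∑' t, hsE τ μ *
            (hsE τ t * (DimK b ⊥ t : ℝ≥0∞) * r ^ (t.card - τ.card)) := by
          rw [ENNReal.tsum_comm]
      _ = G * ∑' τ, hsE τ μ *
            ∑' t, hsE τ t * (DimK b ⊥ t : ℝ≥0∞) * r ^ (t.card - τ.card) := by
          congr 1
          apply tsum_congr
          intro τ
          rw [ENNReal.tsum_mul_left]
      _ = G * ∑' τ, hsE τ μ * (G ^ b * (DimK b ⊥ τ : ℝ≥0∞)) := by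
          congr 1
          apply tsum_congr
          intro τ
          rw [ih τ]
      _ = G ^ (b + 1) * (DimK (b + 1) ⊥ μ : ℝ≥0∞) := by
          rw [DimK_succ, ← ENNReal.tsum_mul_left, ← ENNReal.tsum_mul_left, pow_succ]
          apply tsum_congr
          intro τ
          ring

open Classical in
lemma mainsum (r : ℝ≥0∞) (k : ℕ) : ∀ a : ℕ,
    ∑' ν, (DimK a ⊥ ν : ℝ≥0∞) * (DimK k ⊥ ν : ℝ≥0∞) * r ^ ν.card
      = (∑' n : ℕ, r ^ n) ^ (a * k) := by
  intro a
  induction a with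
  | zero =>
    rw [tsum_eq_single ⊥ (fun ν hν => by
      rw [DimK_zero, if_neg hν]
      simp)]
    rw [DimK_zero, if_pos rfl, DimK_bot, card_bot]
    simp
  | succ a ih =>
    set G := ∑' n : ℕ, r ^ n with hG
    calc ∑' ν, (DimK (a + 1) ⊥ ν : ℝ≥0∞) * (DimK k ⊥ ν : ℝ≥0∞) * r ^ ν.card
        = ∑' ν, ∑' t, (DimK a ⊥ t : ℝ≥0∞) * r ^ t.card *
            (hsE t ν * (DimK k ⊥ ν : ℝ≥0∞) * r ^ (ν.card - t.card)) := by
          apply tsum_congr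
          intro ν
          rw [DimK_succ, ← ENNReal.tsum_mul_right, ← ENNReal.tsum_mul_right]
          apply tsum_congr
          intro t
          by_cases h : HStrip t ν
          · have hle : t.card ≤ ν.card := card_mono h.1
            have : t.card + (ν.card - t.card) = ν.card := by omega
            rw [← this, pow_add]
            have h2 : t.card + (ν.card - t.card) - t.card = ν.card - t.card := by omega
            rw [h2]
            simp only [hsE, if_pos h]
            ring
          · simp [hsE, if_neg h]
      _ = ∑' t, ∑' ν, (DimK a ⊥ t : ℝ≥0∞) * r ^ t.card *
            (hsE t ν * (DimK k ⊥ ν : ℝ≥0∞) * r ^ (ν.card - t.card)) :=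
          ENNReal.tsum_comm
      _ = ∑' t, (DimK a ⊥ t : ℝ≥0∞) * r ^ t.card * (G ^ k * (DimK k ⊥ t : ℝ≥0∞)) := by
          apply tsum_congr
          intro t
          rw [ENNReal.tsum_mul_left, L2 r k t]
      _ = G ^ k * ∑' t, (DimK a ⊥ t : ℝ≥0∞) * (DimK k ⊥ t : ℝ≥0∞) * r ^ t.card := by
          rw [← ENNReal.tsum_mul_left]
          apply tsum_congr
          intro t
          ring
      _ = G ^ ((a + 1) * k) := by
          rw [ih, ← pow_add]
          congr 1
          ring

end YDAux


open YDAux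

/-- Normalization identity for the time-zero marginal of the Geometric RSK process:
`∑_ν Dim_k(ν)² q^{|ν|} = (1-q)^{-k²}`. -/
theorem sum_DimK_sq_geom (k : ℕ) (hk : 1 ≤ k) (q : ℝ) (hq0 : 0 ≤ q) (hq1 : q < 1) :
    HasSum (fun ν : YoungDiagram => (DimK k ⊥ ν : ℝ) ^ 2 * q ^ ν.card)
      (((1 - q) ^ (k ^ 2))⁻¹) := by
  set q' : ℝ≥0 := ⟨q, hq0⟩ with hq'def
  have hq'coe : (q' : ℝ) = q := rfl
  have hq'1 : q' < 1 := by
    rw [← NNReal.coe_lt_coe, hq'coe, NNReal.coe_one]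
    exact hq1
  have h1q : (1 - q' : ℝ≥0) ≠ 0 := ne_of_gt (tsub_pos_of_lt hq'1)
  set r : ℝ≥0∞ := (q' : ℝ≥0∞) with hrdef
  have hmain := mainsum r k k
  have hfun : ∀ ν : YoungDiagram,
      ((((DimK k ⊥ ν : ℝ≥0)) ^ 2 * q' ^ ν.card : ℝ≥0) : ℝ≥0∞)
        = (DimK k ⊥ ν : ℝ≥0∞) * (DimK k ⊥ ν : ℝ≥0∞) * r ^ ν.card := by
    intro ν
    push_cast
    ring
  have hval : ((∑' n : ℕ, r ^ n) ^ (k * k) : ℝ≥0∞)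
      = ((((1 - q') ^ (k ^ 2))⁻¹ : ℝ≥0) : ℝ≥0∞) := by
    rw [ENNReal.tsum_geometric]
    have h1 : (1 - r) = ((1 - q' : ℝ≥0) : ℝ≥0∞) := by
      rw [ENNReal.coe_sub, ENNReal.coe_one]
    rw [h1, ← ENNReal.coe_inv h1q, ← ENNReal.coe_pow, inv_pow,
      show k * k = k ^ 2 from (pow_two k).symm]
  have he : (∑' ν : YoungDiagram,
        ((((DimK k ⊥ ν : ℝ≥0)) ^ 2 * q' ^ ν.card : ℝ≥0) : ℝ≥0∞))
      = ((((1 - q') ^ (k ^ 2))⁻¹ : ℝ≥0) : ℝ≥0∞) := by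
    rw [tsum_congr hfun, hmain, hval]
  have hsumE : HasSum (fun ν : YoungDiagram =>
      ((((DimK k ⊥ ν : ℝ≥0)) ^ 2 * q' ^ ν.card : ℝ≥0) : ℝ≥0∞))
      ((((1 - q') ^ (k ^ 2))⁻¹ : ℝ≥0) : ℝ≥0∞) := he ▸ ENNReal.summable.hasSum
  rw [ENNReal.hasSum_coe] at hsumE
  have hsumR := NNReal.hasSum_coe.mpr hsumE
  have hfun2 : (fun ν : YoungDiagram =>
        ((((DimK k ⊥ ν : ℝ≥0)) ^ 2 * q' ^ ν.card : ℝ≥0) : ℝ))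
      = fun ν : YoungDiagram => (DimK k ⊥ ν : ℝ) ^ 2 * q ^ ν.card := by
    funext ν
    push_cast
    rw [hq'coe]
  have hval2 : ((((1 - q') ^ (k ^ 2))⁻¹ : ℝ≥0) : ℝ) = ((1 - q) ^ (k ^ 2))⁻¹ := by
    rw [NNReal.coe_inv, NNReal.coe_pow, NNReal.coe_sub hq'1.le, NNReal.coe_one, hq'coe]
  rw [hfun2, hval2] at hsumR
  exact hsumR
end
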